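/- Let X be a compact Hausdorff space with C(X) acting on H satisfying the localization hypotheses, and A the algebra of local operators with parameter. A family {a_x ∈ A_x}_{x∈X} of elements of the local algebras arises as the localization {p_x(A)} of a single A ∈ A if and only if it is continuous, i.e., choosing representatives A_x ∈ a_x, for every ε > 0 each x has a neighborhood U(ε,x) with ‖A_x − A_{x'}‖ restricted to vectors supported in the closure of U(ε,x) ∩ U(ε,x') at most ε, for all x, x'. -/

import Mathlib

set_option linter.unusedSectionVars false
set_option maxHeartbeats 1000000


open Filter Topology

section Localization

variable {X : Type*} [TopologicalSpace X] [CompactSpace X] [T2Space X]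
variable {H : Type*} [NormedAddCommGroup H] [InnerProductSpace ℂ H] [CompleteSpace H]

/-- The complexification of a real-valued continuous function. -/
def toCC {X : Type*} [TopologicalSpace X] (φ : C(X, ℝ)) : C(X, ℂ) :=
  ⟨fun x => (φ x : ℂ), Complex.continuous_ofReal.comp φ.continuous⟩

/-- The localizing class `F_x` at a point `x`: continuous functions with values in `[0,1]`
equal to `1` in a neighborhood of `x`. -/
def locClass (x : X) : Set C(X, ℝ) :=
  {φ | (∀ y, φ y ∈ Set.Icc (0:ℝ) 1) ∧ ∃ U ∈ 𝓝 x, ∀ y ∈ U, φ y = 1}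

variable (π : C(X, ℂ) →⋆ₐ[ℂ] (H →L[ℂ] H))

/-- The C*-algebra `𝒜` of local operators: bounded operators commuting with the
action of every `φ ∈ C(X)` modulo compact operators. -/
def localOps : Set (H →L[ℂ] H) :=
  {T | ∀ φ : C(X, ℂ), IsCompactOperator ⇑(T ∘L π φ - π φ ∘L T)}

/-- The closed two-sided ideal `J_x` of `𝒜` generated by the functions vanishing at `x`. -/
def Jloc (x : X) : Set (H →L[ℂ] H) :=
  closure {T | ∃ (n : ℕ) (A B : Fin n → H →L[ℂ] H) (φ : Fin n → C(X, ℂ)),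
    (∀ i, A i ∈ localOps π) ∧ (∀ i, B i ∈ localOps π) ∧ (∀ i, φ i x = 0) ∧
    T = ∑ i, (A i) ∘L (π (φ i)) ∘L (B i)}

/-- The representation of `C(X)` is faithful and meets the compact operators trivially. -/
def FaithfulNoCompact : Prop :=
  Function.Injective π ∧ ∀ φ : C(X, ℂ), IsCompactOperator ⇑(π φ) → φ = 0

/-- Each localizing class `F_x`, directed by `φ ≺ ψ ↔ φψ = ψ`, converges strongly to `0`. -/
def LocStrongConv : Prop :=
  ∀ (x : X) (v : H) (ε : ℝ), 0 < ε →
    ∃ φ ∈ locClass x, ∀ ψ ∈ locClass x, φ * ψ = ψ → ‖π (toCC ψ) v‖ < ε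

end Localization

section LocalNorms

variable {X : Type*} [TopologicalSpace X] [CompactSpace X] [T2Space X]
variable {H : Type*} [NormedAddCommGroup H] [InnerProductSpace ℂ H] [CompleteSpace H]
variable (π : C(X, ℂ) →⋆ₐ[ℂ] (H →L[ℂ] H))

/-- The subspace `H_Q ⊆ H` of vectors supported in the closure of `Q ⊆ X`:
those fixed by multiplication by any continuous function equal to `1` on a
neighborhood of the closure of `Q`. -/
def suppSubspace (Q : Set X) : Set H :=
  {v | ∀ φ : C(X, ℝ), (∃ U : Set X, IsOpen U ∧ closure Q ⊆ U ∧ ∀ y ∈ U, φ y = 1) →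
    π (toCC φ) v = v}

/-- The local norm `‖B‖_Q`: the norm of the restriction of `B` to the subspace of
vectors supported in the closure of `Q`. -/
noncomputable def normOn (B : H →L[ℂ] H) (Q : Set X) : ℝ :=
  sSup {r | ∃ v ∈ suppSubspace π Q, ‖v‖ ≤ 1 ∧ r = ‖B v‖}

end LocalNorms

/-- Continuity of a family of local representatives `{a_x}`: for every `ε > 0` each
point has a neighborhood `U(ε,x)` such that `‖A_x − A_{x'}‖_{U(ε,x) ∩ U(ε,x')} ≤ ε`. -/
def ContinuousLocalFamily {X : Type*} [TopologicalSpace X] [CompactSpace X] [T2Space X]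
    {H : Type*} [NormedAddCommGroup H] [InnerProductSpace ℂ H] [CompleteSpace H]
    (π : C(X, ℂ) →⋆ₐ[ℂ] (H →L[ℂ] H)) (a : X → H →L[ℂ] H) : Prop :=
  ∀ ε : ℝ, 0 < ε → ∃ U : X → Set X, (∀ x, U x ∈ 𝓝 x) ∧
    ∀ x x' : X, normOn π (a x - a x') (U x ∩ U x') ≤ ε


section Aux

variable {X : Type*} [TopologicalSpace X] [CompactSpace X] [T2Space X]
variable {H : Type*} [NormedAddCommGroup H] [InnerProductSpace ℂ H] [CompleteSpace H]
variable (π : C(X, ℂ) →⋆ₐ[ℂ] (H →L[ℂ] H))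

local notation "⟪" x ", " y "⟫" => @inner ℂ _ _ x y

@[simp] lemma toCC_apply (f : C(X,ℝ)) (y : X) : toCC f y = (f y : ℂ) := rfl

lemma toCC_mul (f g : C(X,ℝ)) : toCC (f * g) = toCC f * toCC g := by
  ext y; simp [toCC]

lemma toCC_one : toCC (1 : C(X,ℝ)) = 1 := by ext y; simp [toCC]

lemma toCC_sub (f g : C(X,ℝ)) : toCC (f - g) = toCC f - toCC g := by
  ext y; simp [toCC]

lemma toCC_sum {ι : Type*} (s : Finset ι) (f : ι → C(X,ℝ)) :
    toCC (∑ i ∈ s, f i) = ∑ i ∈ s, toCC (f i) := by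
  ext y; simp [toCC]

lemma star_toCC (f : C(X,ℝ)) : star (toCC f) = toCC f := by
  ext y
  simp [toCC, Complex.conj_ofReal]

lemma norm_toCC_le (f : C(X,ℝ)) {c : ℝ} (hc : 0 ≤ c) (h : ∀ y, |f y| ≤ c) :
    ‖toCC f‖ ≤ c := by
  rw [ContinuousMap.norm_le _ hc]
  intro y
  simpa [toCC] using h y

lemma pi_norm_le (f : C(X,ℝ)) {c : ℝ} (hc : 0 ≤ c) (h : ∀ y, |f y| ≤ c) :
    ‖π (toCC f)‖ ≤ c :=
  (NonUnitalStarAlgHom.norm_apply_le π (toCC f)).trans (norm_toCC_le f hc h)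

lemma pi_norm_le_one (f : C(X,ℝ)) (h : ∀ y, f y ∈ Set.Icc (0:ℝ) 1) :
    ‖π (toCC f)‖ ≤ 1 :=
  pi_norm_le π f one_pos.le fun y => abs_le.mpr ⟨by linarith [(h y).1], (h y).2⟩

lemma pi_adjoint (f : C(X,ℝ)) :
    ContinuousLinearMap.adjoint (π (toCC f)) = π (toCC f) := by
  rw [← ContinuousLinearMap.star_eq_adjoint, ← map_star, star_toCC]

lemma pi_inner_move (f : C(X,ℝ)) (v w : H) :
    ⟪π (toCC f) v, w⟫ = ⟪v, π (toCC f) w⟫ := by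
  conv_lhs => rw [← pi_adjoint π f]
  rw [ContinuousLinearMap.adjoint_inner_left]


lemma inner_self_re (w : H) : (⟪w, w⟫).re = ‖w‖^2 :=
  inner_self_eq_norm_sq (𝕜 := ℂ) w

lemma re_le_norm (z : ℂ) : z.re ≤ ‖z‖ := by
  simpa using Complex.re_le_norm z

lemma sum_sq_pi_le {ι : Type*} (s : Finset ι) (τ : ι → C(X,ℝ))
    (h1 : ∀ y, ∑ i ∈ s, (τ i y)^2 ≤ 1) (v : H) :
    ∑ i ∈ s, ‖π (toCC (τ i)) v‖^2 ≤ ‖v‖^2 := by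
  have key : ∀ i, ‖π (toCC (τ i)) v‖^2 = (⟪v, π (toCC (τ i * τ i)) v⟫).re := by
    intro i
    rw [toCC_mul, map_mul]
    have h2 : ⟪v, (π (toCC (τ i)) * π (toCC (τ i))) v⟫
        = ⟪π (toCC (τ i)) v, π (toCC (τ i)) v⟫ := by
      rw [ContinuousLinearMap.mul_apply, pi_inner_move]
    rw [h2, inner_self_re]
  calc ∑ i ∈ s, ‖π (toCC (τ i)) v‖^2
      = (⟪v, π (toCC (∑ i ∈ s, τ i * τ i)) v⟫).re := by
        rw [toCC_sum, map_sum]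
        simp only [key]
        rw [ContinuousLinearMap.sum_apply, inner_sum, Complex.re_sum]
    _ ≤ ‖v‖ * ‖π (toCC (∑ i ∈ s, τ i * τ i)) v‖ := by
        refine (re_le_norm _).trans ?_
        exact norm_inner_le_norm (𝕜 := ℂ) v _
    _ ≤ ‖v‖ * (1 * ‖v‖) := by
        have hb : ‖π (toCC (∑ i ∈ s, τ i * τ i))‖ ≤ 1 := by
          refine pi_norm_le_one π _ fun y => ?_
          constructor
          · simpa using Finset.sum_nonneg (fun i (_ : i ∈ s) => mul_self_nonneg (τ i y))
          · have h3 := h1 y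
            simp only [sq] at h3
            simpa using h3
        refine mul_le_mul_of_nonneg_left ?_ (norm_nonneg v)
        calc ‖π (toCC (∑ i ∈ s, τ i * τ i)) v‖
            ≤ ‖π (toCC (∑ i ∈ s, τ i * τ i))‖ * ‖v‖ := ContinuousLinearMap.le_opNorm _ _
          _ ≤ 1 * ‖v‖ := mul_le_mul_of_nonneg_right hb (norm_nonneg v)
    _ = ‖v‖^2 := by ring

/-- The key almost-orthogonality estimate: a sum of operators of the form
`π(σ i) ∘ D i ∘ π(τ i)` with `∑ σᵢ² ≤ 1`, `∑ τᵢ² ≤ 1` and `‖D i (π(τ i) v)‖ ≤ ε ‖π(τ i) v‖`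
has norm at most `ε`. -/
lemma sum_triple_norm_le {ι : Type*} (s : Finset ι) (σ τ : ι → C(X,ℝ))
    (D : ι → H →L[ℂ] H) {ε : ℝ} (hε : 0 ≤ ε)
    (hσ1 : ∀ y, ∑ i ∈ s, (σ i y)^2 ≤ 1) (hτ1 : ∀ y, ∑ i ∈ s, (τ i y)^2 ≤ 1)
    (hD : ∀ i ∈ s, ∀ v : H, ‖D i (π (toCC (τ i)) v)‖ ≤ ε * ‖π (toCC (τ i)) v‖) :
    ‖∑ i ∈ s, π (toCC (σ i)) ∘L D i ∘L π (toCC (τ i))‖ ≤ ε := by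
  refine ContinuousLinearMap.opNorm_le_bound _ hε (fun v => ?_)
  set S : H →L[ℂ] H := ∑ i ∈ s, π (toCC (σ i)) ∘L D i ∘L π (toCC (τ i)) with hS
  have expand : (‖S v‖:ℝ)^2
      = ∑ i ∈ s, (⟪D i (π (toCC (τ i)) v), π (toCC (σ i)) (S v)⟫).re := by
    have h0 : ⟪S v, S v⟫ = ∑ i ∈ s, ⟪D i (π (toCC (τ i)) v), π (toCC (σ i)) (S v)⟫ := by
      have hSv : S v = ∑ i ∈ s, π (toCC (σ i)) (D i (π (toCC (τ i)) v)) := by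
        rw [hS, ContinuousLinearMap.sum_apply]; rfl
      nth_rewrite 1 [hSv]
      rw [sum_inner]
      exact Finset.sum_congr rfl fun i _ => (pi_inner_move π (σ i) _ _)
    rw [← inner_self_re, h0, Complex.re_sum]
  have hstep : (‖S v‖:ℝ)^2 ≤ ε * (‖v‖ * ‖S v‖) := by
    rw [expand]
    have h1 : ∀ i ∈ s, (⟪D i (π (toCC (τ i)) v), π (toCC (σ i)) (S v)⟫).re
        ≤ (ε * ‖π (toCC (τ i)) v‖) * ‖π (toCC (σ i)) (S v)‖ := by
      intro i hi
      refine (re_le_norm _).trans ?_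
      refine le_trans ?_ (mul_le_mul_of_nonneg_right (hD i hi v) (norm_nonneg _))
      exact norm_inner_le_norm (𝕜 := ℂ) _ _
    refine (Finset.sum_le_sum h1).trans ?_
    have h2 : ∑ i ∈ s, (ε * ‖π (toCC (τ i)) v‖) * ‖π (toCC (σ i)) (S v)‖
        = ε * ∑ i ∈ s, ‖π (toCC (τ i)) v‖ * ‖π (toCC (σ i)) (S v)‖ := by
      rw [Finset.mul_sum]; exact Finset.sum_congr rfl fun i _ => by ring
    rw [h2]
    refine mul_le_mul_of_nonneg_left ?_ hε
    have CS := Finset.sum_mul_sq_le_sq_mul_sq s (fun i => ‖π (toCC (τ i)) v‖)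
      (fun i => ‖π (toCC (σ i)) (S v)‖)
    have hv := sum_sq_pi_le π s τ hτ1 v
    have hw := sum_sq_pi_le π s σ hσ1 (S v)
    have hnn : (0:ℝ) ≤ ∑ i ∈ s, ‖π (toCC (τ i)) v‖ * ‖π (toCC (σ i)) (S v)‖ :=
      Finset.sum_nonneg fun i _ => mul_nonneg (norm_nonneg _) (norm_nonneg _)
    have hsq : (∑ i ∈ s, ‖π (toCC (τ i)) v‖ * ‖π (toCC (σ i)) (S v)‖)^2
        ≤ (‖v‖ * ‖S v‖)^2 := by
      calc (∑ i ∈ s, ‖π (toCC (τ i)) v‖ * ‖π (toCC (σ i)) (S v)‖)^2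
          ≤ (∑ i ∈ s, ‖π (toCC (τ i)) v‖^2) * ∑ i ∈ s, ‖π (toCC (σ i)) (S v)‖^2 := CS
        _ ≤ ‖v‖^2 * ‖S v‖^2 := by
            refine mul_le_mul hv hw (Finset.sum_nonneg fun i _ => sq_nonneg _) (sq_nonneg _)
        _ = (‖v‖ * ‖S v‖)^2 := by ring
    exact (pow_le_pow_iff_left₀ hnn (mul_nonneg (norm_nonneg _) (norm_nonneg _))
      two_ne_zero).mp hsq
  by_cases h0 : ‖S v‖ = 0
  · rw [h0]; exact mul_nonneg hε (norm_nonneg _)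
  · have hpos : 0 < ‖S v‖ := lt_of_le_of_ne (norm_nonneg _) (Ne.symm h0)
    nlinarith [hstep]

end Aux



section Aux2

variable {X : Type*} [TopologicalSpace X] [CompactSpace X] [T2Space X]
variable {H : Type*} [NormedAddCommGroup H] [InnerProductSpace ℂ H] [CompleteSpace H]
variable (π : C(X, ℂ) →⋆ₐ[ℂ] (H →L[ℂ] H))

/-- Urysohn bump function: `θ = 1` near `x`, supported in `V`. -/
lemma exists_bump (x : X) {V : Set X} (hV : IsOpen V) (hx : x ∈ V) :
    ∃ θ : C(X,ℝ), θ ∈ locClass x ∧ ∀ y, y ∉ V → θ y = 0 := by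
  obtain ⟨u, hu_open, hxu, hu_cl⟩ := normal_exists_closure_subset
      (isClosed_singleton (x := x)) hV (Set.singleton_subset_iff.mpr hx)
  obtain ⟨f, hf0, hf1, hficc⟩ := exists_continuous_zero_one_of_isClosed
      (isClosed_compl_iff.mpr hV) isClosed_closure
      (Set.disjoint_left.mpr fun y hyc hycl => hyc (hu_cl hycl))
  refine ⟨f, ⟨hficc, ⟨u, hu_open.mem_nhds (hxu rfl), fun y hy => hf1 (subset_closure hy)⟩⟩,
    fun y hy => hf0 hy⟩

lemma one_mem_locClass (x : X) : (1 : C(X,ℝ)) ∈ locClass x :=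
  ⟨fun y => by simp, ⟨Set.univ, Filter.univ_mem, fun y _ => rfl⟩⟩

lemma mul_eq_self_of_support (F ψ : C(X,ℝ)) (h : ∀ y, ψ y ≠ 0 → F y = 1) :
    F * ψ = ψ := by
  ext y
  by_cases hy : ψ y = 0
  · simp [hy]
  · simp [h y hy]

/-- A common localizer dominating finitely many members of the localizing class. -/
lemma locClass_dominate {x : X} {ι : Type*} [Finite ι] (F : ι → C(X,ℝ))
    (hF : ∀ i, F i ∈ locClass x) :
    ∃ θ ∈ locClass x, ∀ ψ : C(X,ℝ), θ * ψ = ψ → ∀ i, F i * ψ = ψ := by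
  choose U hU hFU using fun i => (hF i).2
  have hV : (⋂ i, U i) ∈ 𝓝 x := Filter.iInter_mem.mpr hU
  obtain ⟨θ, hθ, hθ0⟩ := exists_bump x isOpen_interior (mem_interior_iff_mem_nhds.mpr hV)
  refine ⟨θ, hθ, fun ψ hψ i => mul_eq_self_of_support _ _ fun y hy => ?_⟩
  have hθy : θ y * ψ y = ψ y := by
    have := congrArg (fun g : C(X,ℝ) => g y) hψ
    simpa using this
  have hθ1 : θ y ≠ 0 := by
    intro h0
    rw [h0, zero_mul] at hθy
    exact hy hθy.symm
  have hyi : y ∈ interior (⋂ i, U i) := by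
    by_contra hyn
    exact hθ1 (hθ0 y hyn)
  exact hFU i y (Set.mem_iInter.mp (interior_subset hyi) i)

/-- Any member of the localizing class dominates some other member. -/
lemma exists_loc_subordinate {x : X} (F : C(X,ℝ)) (hF : F ∈ locClass x) :
    ∃ ψ ∈ locClass x, F * ψ = ψ := by
  obtain ⟨U, hU, hFU⟩ := hF.2
  obtain ⟨ψ, hψ, hψ0⟩ := exists_bump x isOpen_interior (mem_interior_iff_mem_nhds.mpr hU)
  refine ⟨ψ, hψ, mul_eq_self_of_support _ _ fun y hy => ?_⟩
  have : y ∈ interior U := by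
    by_contra hyn
    exact hy (hψ0 y hyn)
  exact hFU y (interior_subset this)

/-- Strong convergence of the localizing net, simultaneously at finitely many vectors. -/
lemma hconv_finite (hconv : LocStrongConv π) (x : X) {ι : Type*} [Fintype ι]
    (w : ι → H) {ε : ℝ} (hε : 0 < ε) :
    ∃ φ ∈ locClass x, ∀ ψ ∈ locClass x, φ * ψ = ψ → ∀ i, ‖π (toCC ψ) (w i)‖ < ε := by
  choose φ hφ hφs using fun i => hconv x (w i) ε hε
  obtain ⟨θ, hθ, hθd⟩ := locClass_dominate φ hφ
  refine ⟨θ, hθ, fun ψ hψ hθψ i => hφs i ψ hψ (hθd ψ hθψ i)⟩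

/-! ### suppSubspace and normOn lemmas -/

lemma suppSubspace_zero_mem (Q : Set X) : (0:H) ∈ suppSubspace π Q :=
  fun φ _ => map_zero _

lemma suppSubspace_smul {Q : Set X} {v : H} (h : v ∈ suppSubspace π Q) (c : ℂ) :
    c • v ∈ suppSubspace π Q :=
  fun φ hφ => by rw [map_smul, h φ hφ]

lemma suppSubspace_mono {Q Q' : Set X} (h : Q ⊆ Q') :
    suppSubspace π Q ⊆ suppSubspace π Q' := by
  rintro v hv φ ⟨U, hUo, hUc, hU1⟩
  exact hv φ ⟨U, hUo, (closure_mono h).trans hUc, hU1⟩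

lemma pi_mem_suppSubspace {Q : Set X} (f : C(X,ℝ)) (hf : ∀ y, f y ≠ 0 → y ∈ Q) (v : H) :
    π (toCC f) v ∈ suppSubspace π Q := by
  rintro φ ⟨U, hUo, hUc, hU1⟩
  have hmul : toCC φ * toCC f = toCC f := by
    rw [← toCC_mul]
    congr 1
    ext y
    by_cases h : f y = 0
    · simp [h]
    · have h1 : φ y = 1 := hU1 y (hUc (subset_closure (hf y h)))
      simp [h1]
  calc π (toCC φ) (π (toCC f) v) = (π (toCC φ) * π (toCC f)) v := rfl
    _ = π (toCC f) v := by rw [← map_mul, hmul]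

lemma normOn_mem_zero (B : H →L[ℂ] H) (Q : Set X) :
    (0:ℝ) ∈ {r | ∃ v ∈ suppSubspace π Q, ‖v‖ ≤ 1 ∧ r = ‖B v‖} :=
  ⟨0, suppSubspace_zero_mem π Q, by simp, by simp⟩

lemma normOn_bddAbove (B : H →L[ℂ] H) (Q : Set X) :
    BddAbove {r | ∃ v ∈ suppSubspace π Q, ‖v‖ ≤ 1 ∧ r = ‖B v‖} := by
  refine ⟨‖B‖, ?_⟩
  rintro r ⟨v, _, hv1, rfl⟩
  calc ‖B v‖ ≤ ‖B‖ * ‖v‖ := B.le_opNorm v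
    _ ≤ ‖B‖ * 1 := mul_le_mul_of_nonneg_left hv1 (norm_nonneg B)
    _ = ‖B‖ := mul_one _

lemma normOn_nonneg (B : H →L[ℂ] H) (Q : Set X) : 0 ≤ normOn π B Q :=
  le_csSup (normOn_bddAbove π B Q) (normOn_mem_zero π B Q)

lemma normOn_le (B : H →L[ℂ] H) (Q : Set X) {c : ℝ} (hc : 0 ≤ c)
    (h : ∀ v ∈ suppSubspace π Q, ‖v‖ ≤ 1 → ‖B v‖ ≤ c) : normOn π B Q ≤ c := by
  refine Real.sSup_le ?_ hc
  rintro r ⟨v, hv, hv1, rfl⟩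
  exact h v hv hv1

lemma le_normOn (B : H →L[ℂ] H) (Q : Set X) {v : H} (hv : v ∈ suppSubspace π Q)
    (h1 : ‖v‖ ≤ 1) : ‖B v‖ ≤ normOn π B Q :=
  le_csSup (normOn_bddAbove π B Q) ⟨v, hv, h1, rfl⟩

lemma normOn_bound (B : H →L[ℂ] H) (Q : Set X) {v : H} (hv : v ∈ suppSubspace π Q) :
    ‖B v‖ ≤ normOn π B Q * ‖v‖ := by
  rcases eq_or_ne v 0 with rfl | hv0
  · simp
  · have hn : (0:ℝ) < ‖v‖ := norm_pos_iff.mpr hv0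
    have hu : ((‖v‖:ℂ)⁻¹ • v) ∈ suppSubspace π Q := suppSubspace_smul π hv _
    have hu1 : ‖(‖v‖:ℂ)⁻¹ • v‖ ≤ 1 := by
      rw [norm_smul]
      simp [norm_inv, hn.le, inv_mul_cancel₀ hn.ne']
    have := le_normOn π B Q hu hu1
    rw [map_smul, norm_smul] at this
    have h2 : ‖((‖v‖:ℂ))⁻¹‖ = ‖v‖⁻¹ := by
      simp
    rw [h2] at this
    calc ‖B v‖ = ‖v‖ * (‖v‖⁻¹ * ‖B v‖) := by field_simp
      _ ≤ ‖v‖ * normOn π B Q := mul_le_mul_of_nonneg_left this hn.le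
      _ = normOn π B Q * ‖v‖ := mul_comm _ _

lemma normOn_mono (B : H →L[ℂ] H) {Q Q' : Set X} (h : Q ⊆ Q') :
    normOn π B Q ≤ normOn π B Q' :=
  normOn_le π B Q (normOn_nonneg π B Q') fun v hv h1 =>
    le_normOn π B Q' (suppSubspace_mono π h hv) h1

lemma normOn_sub_le (B C : H →L[ℂ] H) (Q : Set X) :
    normOn π (B - C) Q ≤ normOn π B Q + normOn π C Q := by
  refine normOn_le π _ Q (add_nonneg (normOn_nonneg π B Q) (normOn_nonneg π C Q))
    fun v hv h1 => ?_
  calc ‖(B - C) v‖ = ‖B v - C v‖ := rfl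
    _ ≤ ‖B v‖ + ‖C v‖ := norm_sub_le _ _
    _ ≤ normOn π B Q + normOn π C Q :=
        add_le_add (le_normOn π B Q hv h1) (le_normOn π C Q hv h1)

lemma normOn_le_opNorm (B : H →L[ℂ] H) (Q : Set X) : normOn π B Q ≤ ‖B‖ := by
  refine normOn_le π B Q (norm_nonneg B) fun v _ h1 => ?_
  calc ‖B v‖ ≤ ‖B‖ * ‖v‖ := B.le_opNorm v
    _ ≤ ‖B‖ * 1 := mul_le_mul_of_nonneg_left h1 (norm_nonneg B)
    _ = ‖B‖ := mul_one _

/-! ### localOps lemmas -/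

lemma pi_mem_localOps (f : C(X,ℂ)) : π f ∈ localOps π := by
  intro φ
  have : π f ∘L π φ - π φ ∘L π f = 0 := by
    have := map_mul π f φ
    have h2 := map_mul π φ f
    rw [mul_comm] at h2
    ext v
    simp only [ContinuousLinearMap.sub_apply, ContinuousLinearMap.comp_apply,
      ContinuousLinearMap.zero_apply]
    rw [← ContinuousLinearMap.mul_apply, ← ContinuousLinearMap.mul_apply, ← this, ← h2, sub_self]
  rw [this]
  simpa using isCompactOperator_zero

lemma one_mem_localOps : (1 : H →L[ℂ] H) ∈ localOps π := by
  intro φ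
  have : (1 : H →L[ℂ] H) ∘L π φ - π φ ∘L 1 = 0 := by ext v; simp
  rw [this]
  simpa using isCompactOperator_zero

lemma localOps_add {S T : H →L[ℂ] H} (hS : S ∈ localOps π) (hT : T ∈ localOps π) :
    S + T ∈ localOps π := by
  intro φ
  have : (S + T) ∘L π φ - π φ ∘L (S + T)
      = (S ∘L π φ - π φ ∘L S) + (T ∘L π φ - π φ ∘L T) := by ext v; simp; abel
  rw [this]
  exact ((hS φ).add (hT φ))

lemma localOps_neg {S : H →L[ℂ] H} (hS : S ∈ localOps π) : -S ∈ localOps π := by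
  intro φ
  have : (-S) ∘L π φ - π φ ∘L (-S) = -(S ∘L π φ - π φ ∘L S) := by ext v; simp; abel
  rw [this]
  exact (hS φ).neg

lemma localOps_sub {S T : H →L[ℂ] H} (hS : S ∈ localOps π) (hT : T ∈ localOps π) :
    S - T ∈ localOps π := by
  have := localOps_add π hS (localOps_neg π hT)
  simpa [sub_eq_add_neg] using this

lemma localOps_smul {S : H →L[ℂ] H} (hS : S ∈ localOps π) (c : ℂ) :
    c • S ∈ localOps π := by
  intro φ
  have : (c • S) ∘L π φ - π φ ∘L (c • S) = c • (S ∘L π φ - π φ ∘L S) := by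
    ext v; simp [smul_sub]
  rw [this]
  exact (hS φ).smul c

lemma localOps_comp {S T : H →L[ℂ] H} (hS : S ∈ localOps π) (hT : T ∈ localOps π) :
    S ∘L T ∈ localOps π := by
  intro φ
  have heq : (S ∘L T) ∘L π φ - π φ ∘L (S ∘L T)
      = S ∘L (T ∘L π φ - π φ ∘L T) + (S ∘L π φ - π φ ∘L S) ∘L T := by
    ext v; simp
  rw [heq]
  have h1 : IsCompactOperator ⇑(S ∘L (T ∘L π φ - π φ ∘L T)) :=
    (hT φ).continuous_comp S.continuous
  have h2 : IsCompactOperator ⇑((S ∘L π φ - π φ ∘L S) ∘L T) :=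
    (hS φ).comp_clm T
  exact h1.add h2

lemma compact_mem_localOps {K : H →L[ℂ] H} (hK : IsCompactOperator ⇑K) :
    K ∈ localOps π := by
  intro φ
  have h1 : IsCompactOperator ⇑(K ∘L π φ) := hK.comp_clm (π φ)
  have h2 : IsCompactOperator ⇑(π φ ∘L K) := hK.continuous_comp (π φ).continuous
  have : ⇑(K ∘L π φ - π φ ∘L K) = ⇑(K ∘L π φ) - ⇑(π φ ∘L K) := by rfl
  rw [this]
  exact h1.sub h2

lemma isClosed_localOps : IsClosed (localOps π) := by
  have : localOps π = ⋂ φ : C(X,ℂ),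
      (fun T : H →L[ℂ] H => T ∘L π φ - π φ ∘L T) ⁻¹' {f : H →L[ℂ] H | IsCompactOperator ⇑f} := by
    ext T
    simp [localOps, Set.mem_iInter]
  rw [this]
  refine isClosed_iInter fun φ => IsClosed.preimage ?_ isClosed_setOf_isCompactOperator
  have : Continuous fun T : H →L[ℂ] H => T * π φ - π φ * T :=
    (continuous_id.mul continuous_const).sub (continuous_const.mul continuous_id)
  exact this

end Aux2


section Aux3

variable {X : Type*} [TopologicalSpace X] [CompactSpace X] [T2Space X]
variable {H : Type*} [NormedAddCommGroup H] [InnerProductSpace ℂ H] [CompleteSpace H]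
variable (π : C(X, ℂ) →⋆ₐ[ℂ] (H →L[ℂ] H))

local notation "⟪" x ", " y "⟫" => @inner ℂ _ _ x y

/-- The generating set of the ideal `J_x`. -/
def Jgen (x : X) : Set (H →L[ℂ] H) :=
  {T | ∃ (n : ℕ) (A B : Fin n → H →L[ℂ] H) (φ : Fin n → C(X, ℂ)),
    (∀ i, A i ∈ localOps π) ∧ (∀ i, B i ∈ localOps π) ∧ (∀ i, φ i x = 0) ∧
    T = ∑ i, (A i) ∘L (π (φ i)) ∘L (B i)}

lemma Jloc_eq_closure (x : X) : Jloc π x = closure (Jgen π x) := rfl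

lemma isClosed_Jloc (x : X) : IsClosed (Jloc π x) := isClosed_closure

lemma Jgen_zero (x : X) : (0 : H →L[ℂ] H) ∈ Jgen π x :=
  ⟨0, Fin.elim0, Fin.elim0, Fin.elim0, fun i => i.elim0, fun i => i.elim0, fun i => i.elim0,
    by simp⟩

lemma Jgen_add {x : X} {S T : H →L[ℂ] H} (hS : S ∈ Jgen π x) (hT : T ∈ Jgen π x) :
    S + T ∈ Jgen π x := by
  obtain ⟨n, A, B, φ, hA, hB, hφ, rfl⟩ := hS
  obtain ⟨m, A', B', φ', hA', hB', hφ', rfl⟩ := hT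
  refine ⟨n + m, Fin.addCases A A', Fin.addCases B B', Fin.addCases φ φ',
    fun i => ?_, fun i => ?_, fun i => ?_, ?_⟩
  · exact Fin.addCases (fun j => by simpa using hA j) (fun j => by simpa using hA' j) i
  · exact Fin.addCases (fun j => by simpa using hB j) (fun j => by simpa using hB' j) i
  · exact Fin.addCases (fun j => by simpa using hφ j) (fun j => by simpa using hφ' j) i
  · rw [Fin.sum_univ_add]
    congr 1
    · exact Finset.sum_congr rfl fun j _ => by simp
    · exact Finset.sum_congr rfl fun j _ => by simp

lemma Jgen_smul {x : X} {S : H →L[ℂ] H} (hS : S ∈ Jgen π x) (c : ℂ) :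
    c • S ∈ Jgen π x := by
  obtain ⟨n, A, B, φ, hA, hB, hφ, rfl⟩ := hS
  refine ⟨n, fun i => c • A i, B, φ, fun i => localOps_smul π (hA i) c, hB, hφ, ?_⟩
  rw [Finset.smul_sum]
  exact Finset.sum_congr rfl fun i _ => by
    ext v; simp

lemma Jgen_subset_Jloc (x : X) : Jgen π x ⊆ Jloc π x := subset_closure

lemma Jloc_add {x : X} {S T : H →L[ℂ] H} (hS : S ∈ Jloc π x) (hT : T ∈ Jloc π x) :
    S + T ∈ Jloc π x := by
  rw [Jloc_eq_closure, Metric.mem_closure_iff]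
  intro ε hε
  rw [Jloc_eq_closure, Metric.mem_closure_iff] at hS hT
  obtain ⟨S', hS', hSd⟩ := hS (ε/2) (by positivity)
  obtain ⟨T', hT', hTd⟩ := hT (ε/2) (by positivity)
  refine ⟨S' + T', Jgen_add π hS' hT', ?_⟩
  rw [dist_eq_norm] at hSd hTd ⊢
  calc ‖S + T - (S' + T')‖ = ‖(S - S') + (T - T')‖ := by congr 1; abel
    _ ≤ ‖S - S'‖ + ‖T - T'‖ := norm_add_le _ _
    _ < ε/2 + ε/2 := add_lt_add hSd hTd
    _ = ε := by ring

lemma Jloc_smul {x : X} {S : H →L[ℂ] H} (hS : S ∈ Jloc π x) (c : ℂ) :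
    c • S ∈ Jloc π x := by
  rcases eq_or_ne c 0 with rfl | hc
  · simpa using Jgen_subset_Jloc π x (Jgen_zero π x)
  rw [Jloc_eq_closure, Metric.mem_closure_iff]
  intro ε hε
  rw [Jloc_eq_closure, Metric.mem_closure_iff] at hS
  obtain ⟨S', hS', hSd⟩ := hS (ε / ‖c‖) (div_pos hε (norm_pos_iff.mpr hc))
  refine ⟨c • S', Jgen_smul π hS' c, ?_⟩
  rw [dist_eq_norm] at hSd ⊢
  calc ‖c • S - c • S'‖ = ‖c • (S - S')‖ := by rw [smul_sub]
    _ = ‖c‖ * ‖S - S'‖ := by rw [norm_smul]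
    _ < ‖c‖ * (ε / ‖c‖) := by
        exact mul_lt_mul_of_pos_left hSd (norm_pos_iff.mpr hc)
    _ = ε := by
        have h0 : ‖c‖ ≠ 0 := (norm_pos_iff.mpr hc).ne'
        rw [mul_comm, div_mul_cancel₀ _ h0]

lemma Jloc_neg {x : X} {S : H →L[ℂ] H} (hS : S ∈ Jloc π x) : -S ∈ Jloc π x := by
  have := Jloc_smul π hS (-1)
  simpa using this

lemma Jloc_sub {x : X} {S T : H →L[ℂ] H} (hS : S ∈ Jloc π x) (hT : T ∈ Jloc π x) :
    S - T ∈ Jloc π x := by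
  have := Jloc_add π hS (Jloc_neg π hT)
  simpa [sub_eq_add_neg] using this

lemma comp_pi_comp_mem_Jgen {x : X} {A B : H →L[ℂ] H} (hA : A ∈ localOps π)
    (hB : B ∈ localOps π) {φ : C(X,ℂ)} (hφ : φ x = 0) :
    A ∘L π φ ∘L B ∈ Jgen π x := by
  refine ⟨1, fun _ => A, fun _ => B, fun _ => φ, fun _ => hA, fun _ => hB, fun _ => hφ, ?_⟩
  exact (Fin.sum_univ_one (fun _ : Fin 1 => A ∘L π φ ∘L B)).symm

lemma comp_pi_mem_Jloc {x : X} {A : H →L[ℂ] H} (hA : A ∈ localOps π)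
    {φ : C(X,ℂ)} (hφ : φ x = 0) : A ∘L π φ ∈ Jloc π x := by
  have h := comp_pi_comp_mem_Jgen π hA (one_mem_localOps π) (hφ := hφ)
  have : A ∘L π φ ∘L (1 : H →L[ℂ] H) = A ∘L π φ := by ext v; simp
  rw [this] at h
  exact Jgen_subset_Jloc π x h

/-- ε-net for the image of the unit ball under a compact operator. -/
lemma compact_net {C : H →L[ℂ] H} (hC : IsCompactOperator ⇑C) {δ : ℝ} (hδ : 0 < δ) :
    ∃ s : Finset H, ∀ u : H, ‖u‖ ≤ 1 → ∃ w ∈ s, ‖C u - w‖ < δ := by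
  obtain ⟨K, hK, hKmem⟩ := hC
  obtain ⟨r, hr, hball⟩ := Metric.mem_nhds_iff.mp hKmem
  obtain ⟨t, htfin, htcov⟩ := Metric.totallyBounded_iff.mp hK.totallyBounded
    (δ * (r/2)) (by positivity)
  classical
  refine ⟨htfin.toFinset.image (fun y => (((2/r : ℝ) : ℂ)) • y), fun u hu => ?_⟩
  have hmem : (((r/2 : ℝ) : ℂ)) • u ∈ Metric.ball (0:H) r := by
    rw [Metric.mem_ball, dist_zero_right, norm_smul]
    have : ‖(((r/2 : ℝ) : ℂ))‖ = r/2 := by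
      rw [Complex.norm_real, Real.norm_eq_abs, abs_of_pos (by positivity)]
    rw [this]
    calc r/2 * ‖u‖ ≤ r/2 * 1 := by
          exact mul_le_mul_of_nonneg_left hu (by positivity)
      _ < r := by linarith
  have hCK : C ((((r/2 : ℝ) : ℂ)) • u) ∈ K := hball hmem
  obtain ⟨y, hy, hyd⟩ := Set.mem_iUnion₂.mp (htcov hCK)
  refine ⟨(((2/r : ℝ) : ℂ)) • y, Finset.mem_image_of_mem _ (htfin.mem_toFinset.mpr hy), ?_⟩
  rw [Metric.mem_ball, dist_eq_norm] at hyd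
  have key : C u - (((2/r : ℝ) : ℂ)) • y
      = (((2/r : ℝ) : ℂ)) • (C ((((r/2 : ℝ) : ℂ)) • u) - y) := by
    rw [map_smul, smul_sub, smul_smul]
    congr 1
    have h1 : (2/r) * (r/2) = (1:ℝ) := by
      have hr0 : r ≠ 0 := hr.ne'
      field_simp
    have : (((2/r : ℝ) : ℂ)) * (((r/2 : ℝ) : ℂ)) = 1 := by
      rw [← Complex.ofReal_mul, h1, Complex.ofReal_one]
    rw [this, one_smul]
  rw [key, norm_smul]
  have h2r : ‖(((2/r : ℝ) : ℂ))‖ = 2/r := by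
    rw [Complex.norm_real, Real.norm_eq_abs, abs_of_pos (by positivity)]
  rw [h2r]
  calc 2/r * ‖C ((((r/2 : ℝ) : ℂ)) • u) - y‖ < 2/r * (δ * (r/2)) := by
        exact mul_lt_mul_of_pos_left hyd (by positivity)
    _ = δ := by field_simp

/-- The squeeze lemma: a compact operator composed with a deep localizer has small norm. -/
lemma squeeze (hconv : LocStrongConv π) (x : X) {C : H →L[ℂ] H}
    (hC : IsCompactOperator ⇑C) {ε : ℝ} (hε : 0 < ε) :
    ∃ φ ∈ locClass x, ∀ ψ ∈ locClass x, φ * ψ = ψ → ‖C ∘L π (toCC ψ)‖ ≤ ε := by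
  classical
  obtain ⟨s, hs⟩ := compact_net hC (δ := ε/4) (by positivity)
  set V : Submodule ℂ H := Submodule.span ℂ (s : Set H) with hV
  haveI : FiniteDimensional ℂ V := FiniteDimensional.span_finset ℂ s
  set d := Module.finrank ℂ V with hd
  set b := stdOrthonormalBasis ℂ V with hb
  set z : Fin d → H := fun k => ContinuousLinearMap.adjoint C ((b k : H)) with hz
  have hδ : (0:ℝ) < ε / (4 * (d+1)) := by positivity
  obtain ⟨φ₀, hφ₀, hsmall⟩ := hconv_finite π hconv x z hδ
  refine ⟨φ₀, hφ₀, fun ψ hψ hφψ => ?_⟩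
  have hψ1 : ‖π (toCC ψ)‖ ≤ 1 := pi_norm_le_one π ψ hψ.1
  -- bound for unit vectors
  have hunit : ∀ u : H, ‖u‖ ≤ 1 → ‖C (π (toCC ψ) u)‖ ≤ ε/2 := by
    intro u hu
    set w₁ := π (toCC ψ) u with hw₁
    have hw₁n : ‖w₁‖ ≤ 1 := by
      calc ‖w₁‖ ≤ ‖π (toCC ψ)‖ * ‖u‖ := ContinuousLinearMap.le_opNorm _ _
        _ ≤ 1 * 1 := mul_le_mul hψ1 hu (norm_nonneg u) zero_le_one
        _ = 1 := by ring
    -- C w₁ split by projection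
    have hsplit : C w₁ = (C w₁ - (V.orthogonalProjectionOnto (C w₁) : H))
        + (V.orthogonalProjectionOnto (C w₁) : H) := by abel
    have hfar : ‖C w₁ - (V.orthogonalProjectionOnto (C w₁) : H)‖ ≤ ε/4 := by
      obtain ⟨w, hws, hwd⟩ := hs w₁ hw₁n
      have hwV : w ∈ V := Submodule.subset_span hws
      have hmin : ‖C w₁ - (V.orthogonalProjectionOnto (C w₁) : H)‖ ≤ ‖C w₁ - w‖ := by
        rw [← Submodule.starProjection_apply, Submodule.starProjection_minimal]
        exact ciInf_le_of_le ⟨0, fun r ⟨v, hv⟩ => hv ▸ norm_nonneg _⟩ ⟨w, hwV⟩ le_rfl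
      exact hmin.trans hwd.le
    have hproj : ‖(V.orthogonalProjectionOnto (C w₁) : H)‖ ≤ ε/4 := by
      have hexp : V.orthogonalProjectionOnto (C w₁) = ∑ k, ⟪(b k : H), C w₁⟫ • b k :=
        b.orthogonalProjectionOnto_apply_eq_sum (C w₁)
      have hcoe : ((V.orthogonalProjectionOnto (C w₁)) : H) = ∑ k, ⟪(b k : H), C w₁⟫ • (b k : H) := by
        rw [hexp]
        push_cast
        rfl
      rw [hcoe]
      calc ‖∑ k, ⟪(b k : H), C w₁⟫ • (b k : H)‖
          ≤ ∑ k, ‖⟪(b k : H), C w₁⟫ • (b k : H)‖ := norm_sum_le _ _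
        _ ≤ ∑ _k : Fin d, ε / (4 * (d+1)) := by
            refine Finset.sum_le_sum fun k _ => ?_
            rw [norm_smul]
            have hbk : ‖(b k : H)‖ = 1 := by
              have := b.orthonormal.1 k
              exact this
            rw [hbk, mul_one]
            have hmove : ⟪(b k : H), C w₁⟫ = ⟪π (toCC ψ) (z k), u⟫ := by
              have h1 : ⟪ContinuousLinearMap.adjoint C ((b k : H)), w₁⟫ = ⟪(b k : H), C w₁⟫ :=
                ContinuousLinearMap.adjoint_inner_left C w₁ ((b k : H))
              rw [← h1, hw₁]
              exact (pi_inner_move π ψ (z k) u).symm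
            rw [hmove]
            calc ‖⟪π (toCC ψ) (z k), u⟫‖ ≤ ‖π (toCC ψ) (z k)‖ * ‖u‖ :=
                  norm_inner_le_norm _ _
              _ ≤ ε / (4 * (d+1)) * 1 := by
                  refine mul_le_mul (hsmall ψ hψ hφψ k).le hu (norm_nonneg u) hδ.le
              _ = ε / (4 * (d+1)) := mul_one _
        _ = d * (ε / (4 * (d+1))) := by
            rw [Finset.sum_const, Finset.card_univ]
            simp [nsmul_eq_mul]
        _ ≤ ε/4 := by
            have h1 : (d:ℝ) * (ε / (4 * ((d:ℝ)+1))) = ε * ((d:ℝ) / (4 * ((d:ℝ)+1))) := by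
              ring
            rw [h1]
            have h2 : (d:ℝ) / (4 * ((d:ℝ)+1)) ≤ 1/4 := by
              rw [div_le_div_iff₀ (by positivity) (by norm_num)]
              nlinarith [Nat.cast_nonneg (α := ℝ) d]
            calc ε * ((d:ℝ) / (4*((d:ℝ)+1))) ≤ ε * (1/4) :=
                  mul_le_mul_of_nonneg_left h2 hε.le
              _ = ε/4 := by ring
    calc ‖C w₁‖ = ‖(C w₁ - (V.orthogonalProjectionOnto (C w₁) : H))
        + (V.orthogonalProjectionOnto (C w₁) : H)‖ := by rw [← hsplit]
      _ ≤ ‖C w₁ - (V.orthogonalProjectionOnto (C w₁) : H)‖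
          + ‖(V.orthogonalProjectionOnto (C w₁) : H)‖ := norm_add_le _ _
      _ ≤ ε/4 + ε/4 := add_le_add hfar hproj
      _ = ε/2 := by ring
  -- scale to all vectors
  refine ContinuousLinearMap.opNorm_le_bound _ hε.le fun u => ?_
  rcases eq_or_ne u 0 with rfl | hu0
  · simp
  · have hn : (0:ℝ) < ‖u‖ := norm_pos_iff.mpr hu0
    have hu1 : ‖(‖u‖:ℂ)⁻¹ • u‖ ≤ 1 := by
      rw [norm_smul]
      simp [inv_mul_cancel₀ hn.ne']
    have := hunit ((‖u‖:ℂ)⁻¹ • u) hu1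
    rw [map_smul, map_smul, norm_smul] at this
    have h2 : ‖((‖u‖:ℂ))⁻¹‖ = ‖u‖⁻¹ := by simp
    rw [h2] at this
    have hfin : ‖C (π (toCC ψ) u)‖ ≤ ε/2 * ‖u‖ := by
      have := mul_le_mul_of_nonneg_left this hn.le
      calc ‖C (π (toCC ψ) u)‖ = ‖u‖ * (‖u‖⁻¹ * ‖C (π (toCC ψ) u)‖) := by field_simp
        _ ≤ ‖u‖ * (ε/2) := this
        _ = ε/2 * ‖u‖ := mul_comm _ _
    calc ‖(C ∘L π (toCC ψ)) u‖ = ‖C (π (toCC ψ) u)‖ := rfl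
      _ ≤ ε/2 * ‖u‖ := hfin
      _ ≤ ε * ‖u‖ := by nlinarith [norm_nonneg u, hε.le]

/-- Compact operators lie in every local ideal `J_x`. -/
lemma compact_mem_Jloc (hconv : LocStrongConv π) (x : X) {K : H →L[ℂ] H}
    (hK : IsCompactOperator ⇑K) : K ∈ Jloc π x := by
  rw [Jloc_eq_closure, Metric.mem_closure_iff]
  intro ε hε
  obtain ⟨φ₀, hφ₀, hsq⟩ := squeeze π hconv x hK (ε := ε/2) (by positivity)
  obtain ⟨ψ, hψ, hφψ⟩ := exists_loc_subordinate φ₀ hφ₀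
  have hψx : ψ x = 1 := by
    obtain ⟨U, hU, hU1⟩ := hψ.2
    exact hU1 x (mem_of_mem_nhds hU)
  refine ⟨K ∘L π (toCC ((1:C(X,ℝ)) - ψ)), ?_, ?_⟩
  · have h := comp_pi_comp_mem_Jgen π (compact_mem_localOps π hK) (one_mem_localOps π)
      (φ := toCC ((1:C(X,ℝ)) - ψ)) (x := x) (by simp [toCC, hψx])
    have heq : K ∘L π (toCC ((1:C(X,ℝ)) - ψ)) ∘L (1 : H →L[ℂ] H)
        = K ∘L π (toCC ((1:C(X,ℝ)) - ψ)) := by ext v; simp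
    rwa [heq] at h
  · rw [dist_eq_norm]
    have heq : K - K ∘L π (toCC ((1:C(X,ℝ)) - ψ)) = K ∘L π (toCC ψ) := by
      rw [toCC_sub, toCC_one, map_sub, map_one]
      ext v
      simp
    rw [heq]
    calc ‖K ∘L π (toCC ψ)‖ ≤ ε/2 := hsq ψ hψ hφψ
      _ < ε := by linarith

end Aux3



section Aux4

variable {X : Type*} [TopologicalSpace X] [CompactSpace X] [T2Space X]
variable {H : Type*} [NormedAddCommGroup H] [InnerProductSpace ℂ H] [CompleteSpace H]
variable (π : C(X, ℂ) →⋆ₐ[ℂ] (H →L[ℂ] H))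

lemma pi_comp (f g : C(X,ℂ)) : π f ∘L π g = π (f * g) := by
  ext v
  calc π f (π g v) = (π f * π g) v := rfl
    _ = π (f * g) v := by rw [← map_mul]

/-- Elements of `J_x` have arbitrarily small local norm near `x`. -/
lemma Jloc_small_normOn (hconv : LocStrongConv π) {x : X} {T : H →L[ℂ] H}
    (hT : T ∈ Jloc π x) {ε : ℝ} (hε : 0 < ε) :
    ∃ U ∈ 𝓝 x, normOn π T U ≤ ε := by
  classical
  rw [Jloc_eq_closure, Metric.mem_closure_iff] at hT
  obtain ⟨S', hS'gen, hSd⟩ := hT (ε/2) (by positivity)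
  rw [dist_eq_norm] at hSd
  obtain ⟨n, A, B, φ, hA, hB, hφ, hS'eq⟩ := hS'gen
  -- constants
  set M₁ : ℝ := (∑ i, ‖A i‖ * ‖B i‖) + 1 with hM₁
  have hsum1 : 0 ≤ ∑ i, ‖A i‖ * ‖B i‖ :=
    Finset.sum_nonneg fun i _ => mul_nonneg (norm_nonneg _) (norm_nonneg _)
  have hM₁pos : 0 < M₁ := by rw [hM₁]; linarith
  set δ : ℝ := ε / (8 * M₁) with hδdef
  have hδpos : 0 < δ := by rw [hδdef]; positivity
  set M₂ : ℝ := (∑ i, ‖A i‖ * ‖π (φ i)‖) + 1 with hM₂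
  have hsum2 : 0 ≤ ∑ i, ‖A i‖ * ‖π (φ i)‖ :=
    Finset.sum_nonneg fun i _ => mul_nonneg (norm_nonneg _) (norm_nonneg _)
  have hM₂pos : 0 < M₂ := by rw [hM₂]; linarith
  -- the small zone W
  set W : Set X := ⋂ i, (fun y => ‖φ i y‖) ⁻¹' (Set.Iio δ) with hW
  have hWopen : IsOpen W := isOpen_iInter_of_finite fun i =>
    (IsOpen.preimage (by continuity) isOpen_Iio)
  have hxW : x ∈ W := Set.mem_iInter.mpr fun i => by
    simp only [Set.mem_preimage, Set.mem_Iio, hφ i]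
    simpa using hδpos
  obtain ⟨ψ, hψloc, hψ0⟩ := exists_bump x hWopen hxW
  -- the compact commutators
  set Cc : Fin n → (H →L[ℂ] H) := fun i => B i ∘L π (toCC ψ) - π (toCC ψ) ∘L B i with hCc
  have hCcompact : ∀ i, IsCompactOperator ⇑(Cc i) := fun i => hB i (toCC ψ)
  -- squeeze each commutator
  have hsq : ∀ i : Fin n, ∃ φ₀ ∈ locClass x, ∀ ψ' ∈ locClass x, φ₀ * ψ' = ψ' →
      ‖Cc i ∘L π (toCC ψ')‖ ≤ ε / (8 * M₂) :=
    fun i => squeeze π hconv x (hCcompact i) (by positivity)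
  choose φ₀ hφ₀loc hφ₀small using hsq
  -- dominate ψ and all the φ₀ i
  obtain ⟨θ₀, hθ₀loc, hθ₀dom⟩ := locClass_dominate (x := x) (ι := Option (Fin n))
      (fun o => Option.elim o ψ φ₀)
      (fun o => by rcases o with - | i; exacts [hψloc, hφ₀loc i])
  obtain ⟨ψ', hψ'loc, hθ₀ψ'⟩ := exists_loc_subordinate θ₀ hθ₀loc
  have hψψ' : ψ * ψ' = ψ' := hθ₀dom ψ' hθ₀ψ' none
  have hφ₀ψ' : ∀ i, φ₀ i * ψ' = ψ' := fun i => hθ₀dom ψ' hθ₀ψ' (some i)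
  -- the neighbourhood U
  obtain ⟨N', hN', hψ'1⟩ := hψ'loc.2
  obtain ⟨U, hUopen, hxU, hUcl⟩ := normal_exists_closure_subset
    (isClosed_singleton (x := x)) isOpen_interior
    (Set.singleton_subset_iff.mpr (mem_interior_iff_mem_nhds.mpr hN'))
  refine ⟨U, hUopen.mem_nhds (hxU rfl), ?_⟩
  refine normOn_le π _ U hε.le fun v hv h1 => ?_
  -- v is fixed by π ψ'
  have hfix : π (toCC ψ') v = v := hv ψ'
    ⟨interior N', isOpen_interior, hUcl, fun y hy => hψ'1 y (interior_subset hy)⟩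
  have hψv : π (toCC ψ) v = v := by
    conv_lhs => rw [← hfix]
    rw [← ContinuousLinearMap.comp_apply, pi_comp, ← toCC_mul, hψψ', hfix]
  -- decompose B i v
  have hBv : ∀ i, (B i) v = π (toCC ψ) ((B i) v) + (Cc i ∘L π (toCC ψ')) v := by
    intro i
    have h1 : (Cc i ∘L π (toCC ψ')) v = Cc i v := by
      rw [ContinuousLinearMap.comp_apply, hfix]
    rw [h1, hCc]
    simp only [ContinuousLinearMap.sub_apply, ContinuousLinearMap.comp_apply]
    rw [hψv]
    abel
  -- decompose S' v
  have hSv : S' v = (∑ i, (A i) (π (φ i * toCC ψ) ((B i) v)))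
      + ∑ i, (A i) (π (φ i) ((Cc i ∘L π (toCC ψ')) v)) := by
    rw [hS'eq, ContinuousLinearMap.sum_apply, ← Finset.sum_add_distrib]
    refine Finset.sum_congr rfl fun i _ => ?_
    have h2 : π (φ i) (π (toCC ψ) ((B i) v)) = π (φ i * toCC ψ) ((B i) v) := by
      rw [← ContinuousLinearMap.comp_apply, pi_comp]
    calc (A i ∘L π (φ i) ∘L B i) v = A i (π (φ i) ((B i) v)) := rfl
      _ = A i (π (φ i) (π (toCC ψ) ((B i) v) + (Cc i ∘L π (toCC ψ')) v)) := by rw [← hBv]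
      _ = A i (π (φ i * toCC ψ) ((B i) v)) + A i (π (φ i) ((Cc i ∘L π (toCC ψ')) v)) := by
          rw [map_add, map_add, h2]
  -- bound on the multiplier norms
  have hπφψ : ∀ i, ‖π (φ i * toCC ψ)‖ ≤ δ := by
    intro i
    refine (NonUnitalStarAlgHom.norm_apply_le π _).trans ?_
    rw [ContinuousMap.norm_le _ hδpos.le]
    intro y
    rw [ContinuousMap.mul_apply, norm_mul]
    by_cases hy : ψ y = 0
    · simp only [toCC_apply, hy, Complex.ofReal_zero, norm_zero, mul_zero]
      exact hδpos.le
    · have hyW : y ∈ W := by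
        by_contra hyn
        exact hy (hψ0 y hyn)
      have h2 : ‖φ i y‖ < δ := Set.mem_iInter.mp hyW i
      have h3 : ‖(toCC ψ) y‖ ≤ 1 := by
        rw [toCC_apply, Complex.norm_real, Real.norm_eq_abs]
        exact abs_le.mpr ⟨by linarith [(hψloc.1 y).1], (hψloc.1 y).2⟩
      calc ‖φ i y‖ * ‖(toCC ψ) y‖ ≤ δ * 1 :=
            mul_le_mul h2.le h3 (norm_nonneg _) hδpos.le
        _ = δ := mul_one _
  -- final estimate
  have hterm1 : ∀ i : Fin n, ‖(A i) (π (φ i * toCC ψ) ((B i) v))‖ ≤ ‖A i‖ * ‖B i‖ * δ := by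
    intro i
    calc ‖(A i) (π (φ i * toCC ψ) ((B i) v))‖
        ≤ ‖A i‖ * ‖π (φ i * toCC ψ) ((B i) v)‖ := ContinuousLinearMap.le_opNorm _ _
      _ ≤ ‖A i‖ * (‖π (φ i * toCC ψ)‖ * ‖(B i) v‖) := by
          exact mul_le_mul_of_nonneg_left (ContinuousLinearMap.le_opNorm _ _) (norm_nonneg _)
      _ ≤ ‖A i‖ * (δ * (‖B i‖ * 1)) := by
          refine mul_le_mul_of_nonneg_left ?_ (norm_nonneg _)
          refine mul_le_mul (hπφψ i) ?_ (norm_nonneg _) hδpos.le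
          calc ‖(B i) v‖ ≤ ‖B i‖ * ‖v‖ := ContinuousLinearMap.le_opNorm _ _
            _ ≤ ‖B i‖ * 1 := mul_le_mul_of_nonneg_left h1 (norm_nonneg _)
      _ = ‖A i‖ * ‖B i‖ * δ := by ring
  have hterm2 : ∀ i : Fin n, ‖(A i) (π (φ i) ((Cc i ∘L π (toCC ψ')) v))‖
      ≤ ‖A i‖ * ‖π (φ i)‖ * (ε / (8 * M₂)) := by
    intro i
    calc ‖(A i) (π (φ i) ((Cc i ∘L π (toCC ψ')) v))‖
        ≤ ‖A i‖ * ‖π (φ i) ((Cc i ∘L π (toCC ψ')) v)‖ := ContinuousLinearMap.le_opNorm _ _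
      _ ≤ ‖A i‖ * (‖π (φ i)‖ * ‖(Cc i ∘L π (toCC ψ')) v‖) :=
          mul_le_mul_of_nonneg_left (ContinuousLinearMap.le_opNorm _ _) (norm_nonneg _)
      _ ≤ ‖A i‖ * (‖π (φ i)‖ * (ε / (8 * M₂) * 1)) := by
          refine mul_le_mul_of_nonneg_left ?_ (norm_nonneg _)
          refine mul_le_mul_of_nonneg_left ?_ (norm_nonneg _)
          calc ‖(Cc i ∘L π (toCC ψ')) v‖ ≤ ‖Cc i ∘L π (toCC ψ')‖ * ‖v‖ :=
                ContinuousLinearMap.le_opNorm _ _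
            _ ≤ ε / (8 * M₂) * 1 := by
                refine mul_le_mul (hφ₀small i ψ' hψ'loc (hφ₀ψ' i)) h1 (norm_nonneg _) ?_
                positivity
      _ = ‖A i‖ * ‖π (φ i)‖ * (ε / (8 * M₂)) := by ring
  have hS'v : ‖S' v‖ ≤ ε/8 + ε/8 := by
    rw [hSv]
    calc ‖(∑ i, (A i) (π (φ i * toCC ψ) ((B i) v)))
        + ∑ i, (A i) (π (φ i) ((Cc i ∘L π (toCC ψ')) v))‖
        ≤ ‖∑ i, (A i) (π (φ i * toCC ψ) ((B i) v))‖
          + ‖∑ i, (A i) (π (φ i) ((Cc i ∘L π (toCC ψ')) v))‖ := norm_add_le _ _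
      _ ≤ (∑ i, ‖A i‖ * ‖B i‖ * δ) + ∑ i, ‖A i‖ * ‖π (φ i)‖ * (ε / (8 * M₂)) := by
          refine add_le_add ?_ ?_
          · exact (norm_sum_le _ _).trans (Finset.sum_le_sum fun i _ => hterm1 i)
          · exact (norm_sum_le _ _).trans (Finset.sum_le_sum fun i _ => hterm2 i)
      _ ≤ M₁ * δ + M₂ * (ε / (8 * M₂)) := by
          refine add_le_add ?_ ?_
          · rw [← Finset.sum_mul]
            refine mul_le_mul_of_nonneg_right ?_ hδpos.le
            rw [hM₁]; linarith
          · rw [← Finset.sum_mul]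
            refine mul_le_mul_of_nonneg_right ?_ (by positivity)
            rw [hM₂]; linarith
      _ = ε/8 + ε/8 := by
          rw [hδdef]
          field_simp
  calc ‖T v‖ = ‖(T - S') v + S' v‖ := by
        congr 1
        simp
    _ ≤ ‖(T - S') v‖ + ‖S' v‖ := norm_add_le _ _
    _ ≤ ‖T - S'‖ * ‖v‖ + (ε/8 + ε/8) :=
        add_le_add (ContinuousLinearMap.le_opNorm _ _) hS'v
    _ ≤ ε/2 * 1 + (ε/8 + ε/8) := by
        refine add_le_add ?_ le_rfl
        exact mul_le_mul hSd.le h1 (norm_nonneg _) (by positivity)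
    _ ≤ ε := by linarith

end Aux4


section Aux5

variable {X : Type*} [TopologicalSpace X] [CompactSpace X] [T2Space X]
variable {H : Type*} [NormedAddCommGroup H] [InnerProductSpace ℂ H] [CompleteSpace H]
variable (π : C(X, ℂ) →⋆ₐ[ℂ] (H →L[ℂ] H))

lemma isCompactOperator_sum {ι : Type*} (s : Finset ι) (F : ι → H →L[ℂ] H)
    (h : ∀ i ∈ s, IsCompactOperator ⇑(F i)) : IsCompactOperator ⇑(∑ i ∈ s, F i) := by
  classical
  induction s using Finset.induction_on with
  | empty => simpa using isCompactOperator_zero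
  | @insert i s his ih =>
    rw [Finset.sum_insert his]
    have hco : ⇑(F i + ∑ j ∈ s, F j) = ⇑(F i) + ⇑(∑ j ∈ s, F j) := rfl
    rw [hco]
    exact (h i (Finset.mem_insert_self i s)).add
      (ih fun j hj => h j (Finset.mem_insert_of_mem hj))

lemma isCompactOperator_mul_mul {A B C : H →L[ℂ] H} (hC : IsCompactOperator ⇑C) :
    IsCompactOperator ⇑(A * C * B) := by
  have h1 : IsCompactOperator ⇑(C ∘L B) := hC.comp_clm B
  have h2 : IsCompactOperator ⇑(A ∘L (C ∘L B)) := h1.continuous_comp A.continuous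
  have : A * C * B = A ∘L (C ∘L B) := by ext v; rfl
  rw [this]
  exact h2

lemma zero_mem_localOps : (0 : H →L[ℂ] H) ∈ localOps π := by
  intro φ
  have h0 : (0 : H →L[ℂ] H) ∘L π φ - π φ ∘L 0 = 0 := by ext v; simp
  rw [h0]
  simpa using isCompactOperator_zero

lemma localOps_sum {ι : Type*} (s : Finset ι) (F : ι → H →L[ℂ] H)
    (h : ∀ i ∈ s, F i ∈ localOps π) : (∑ i ∈ s, F i) ∈ localOps π := by
  classical
  induction s using Finset.induction_on with
  | empty => simpa using zero_mem_localOps π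
  | @insert i s his ih =>
    rw [Finset.sum_insert his]
    exact localOps_add π (h i (Finset.mem_insert_self i s))
      (ih fun j hj => h j (Finset.mem_insert_of_mem hj))

lemma Jloc_sum {x : X} {ι : Type*} (s : Finset ι) (F : ι → H →L[ℂ] H)
    (h : ∀ i ∈ s, F i ∈ Jloc π x) : (∑ i ∈ s, F i) ∈ Jloc π x := by
  classical
  induction s using Finset.induction_on with
  | empty => simpa using Jgen_subset_Jloc π x (Jgen_zero π x)
  | @insert i s his ih =>
    rw [Finset.sum_insert his]
    exact Jloc_add π (h i (Finset.mem_insert_self i s))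
      (ih fun j hj => h j (Finset.mem_insert_of_mem hj))

/-- Square root of a continuous function. -/
noncomputable def sqrtCM (f : C(X,ℝ)) : C(X,ℝ) :=
  ⟨fun y => Real.sqrt (f y), Real.continuous_sqrt.comp f.continuous⟩

@[simp] lemma sqrtCM_apply (f : C(X,ℝ)) (y : X) : sqrtCM f y = Real.sqrt (f y) := rfl

/-- Finite partition of unity subordinate to a family of neighbourhoods. -/
lemma exists_partition (V : X → Set X) (hV : ∀ x, V x ∈ 𝓝 x) :
    ∃ (n : ℕ) (c : Fin n → X) (χ : Fin n → C(X,ℝ)),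
      (∀ i y, χ i y ∈ Set.Icc (0:ℝ) 1) ∧
      (∀ i y, χ i y ≠ 0 → y ∈ interior (V (c i))) ∧
      (∀ y, ∑ i, χ i y = 1) := by
  classical
  have hcov : (Set.univ : Set X) ⊆ ⋃ x, interior (V x) := fun y _ =>
    Set.mem_iUnion.mpr ⟨y, mem_interior_iff_mem_nhds.mpr (hV y)⟩
  obtain ⟨t, ht⟩ := isCompact_univ.elim_finite_subcover (fun x => interior (V x))
    (fun _ => isOpen_interior) hcov
  set n := t.card with hn
  set e := t.equivFin with he
  set c : Fin n → X := fun i => ((e.symm i : t) : X) with hc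
  have hcov2 : (Set.univ : Set X) ⊆ ⋃ i : Fin n, interior (V (c i)) := by
    intro y hy
    obtain ⟨s, ⟨x₀, rfl⟩, hys⟩ := ht hy
    simp only [Set.mem_iUnion] at hys
    obtain ⟨hx₀t, hyint⟩ := hys
    refine Set.mem_iUnion.mpr ⟨e ⟨x₀, hx₀t⟩, ?_⟩
    have : c (e ⟨x₀, hx₀t⟩) = x₀ := by
      show ((e.symm (e ⟨x₀, hx₀t⟩) : t) : X) = x₀
      rw [Equiv.symm_apply_apply]
    rw [this]
    exact hyint
  obtain ⟨f, hsupp, hsum, hicc, _⟩ := exists_continuous_sum_one_of_isOpen_isCompact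
    (s := fun i : Fin n => interior (V (c i))) (fun _ => isOpen_interior)
    isCompact_univ hcov2
  refine ⟨n, c, f, fun i y => hicc i y, fun i y hy => ?_, fun y => ?_⟩
  · exact hsupp i (subset_tsupport _ hy)
  · have := hsum (Set.mem_univ y)
    simpa using this

end Aux5


section Aux6

variable {X : Type*} [TopologicalSpace X] [CompactSpace X] [T2Space X]
variable {H : Type*} [NormedAddCommGroup H] [InnerProductSpace ℂ H] [CompleteSpace H]
variable (π : C(X, ℂ) →⋆ₐ[ℂ] (H →L[ℂ] H))

lemma pi_mul (f g : C(X,ℝ)) : π (toCC f) * π (toCC g) = π (toCC (f * g)) := by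
  rw [toCC_mul, map_mul]

/-- The sandwich identity modulo a commutator term. -/
lemma sandwich_identity (A : H →L[ℂ] H) (f g : C(X,ℝ)) :
    π (toCC f) * A * π (toCC f) * π (toCC (g*g))
    = π (toCC (f*g)) * A * π (toCC (f*g))
      + π (toCC f) * (A * π (toCC g) - π (toCC g) * A) * π (toCC (f*g)) := by
  have e1 : π (toCC f) * A * π (toCC f) * π (toCC (g*g))
      = π (toCC f) * A * π (toCC (f*(g*g))) := by
    rw [← pi_mul π f (g*g)]
    noncomm_ring
  have e2 : π (toCC f) * (A * π (toCC g) - π (toCC g) * A) * π (toCC (f*g))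
      = π (toCC f) * A * π (toCC (g*(f*g))) - π (toCC (f*g)) * A * π (toCC (f*g)) := by
    rw [← pi_mul π g (f*g), ← pi_mul π f g]
    noncomm_ring
  rw [e1, e2]
  have e3 : f*(g*g) = g*(f*g) := by ring
  rw [e3]
  noncomm_ring

/-- The difference of two sandwiched partition sums is a localized sum modulo compacts. -/
lemma partition_diff_estimate
    (a : X → H →L[ℂ] H) (ha : ∀ x, a x ∈ localOps π)
    {n m : ℕ} (c : Fin n → X) (d : Fin m → X)
    (σ : Fin n → C(X,ℝ)) (τ : Fin m → C(X,ℝ))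
    (Q : Fin n → Fin m → Set X) {ε : ℝ} (hε : 0 ≤ ε)
    (hσ1 : ∀ y, ∑ i, (σ i y)^2 = 1) (hτ1 : ∀ y, ∑ j, (τ j y)^2 = 1)
    (hsupp : ∀ i j y, σ i y * τ j y ≠ 0 → y ∈ Q i j)
    (hnorm : ∀ i j, normOn π (a (c i) - a (d j)) (Q i j) ≤ ε) :
    ∃ K : H →L[ℂ] H, IsCompactOperator ⇑K ∧
      ‖(∑ i, π (toCC (σ i)) * a (c i) * π (toCC (σ i)))
        - (∑ j, π (toCC (τ j)) * a (d j) * π (toCC (τ j))) - K‖ ≤ ε := by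
  classical
  set ρ : Fin n × Fin m → C(X,ℝ) := fun p => σ p.1 * τ p.2 with hρ
  set D : Fin n × Fin m → (H →L[ℂ] H) := fun p => a (c p.1) - a (d p.2) with hD
  set S : H →L[ℂ] H := ∑ p : Fin n × Fin m, π (toCC (ρ p)) * D p * π (toCC (ρ p)) with hS
  set E1 : H →L[ℂ] H := ∑ p : Fin n × Fin m, π (toCC (σ p.1))
      * (a (c p.1) * π (toCC (τ p.2)) - π (toCC (τ p.2)) * a (c p.1))
      * π (toCC (σ p.1 * τ p.2)) with hE1
  set E2 : H →L[ℂ] H := ∑ p : Fin n × Fin m, π (toCC (τ p.2))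
      * (a (d p.2) * π (toCC (σ p.1)) - π (toCC (σ p.1)) * a (d p.2))
      * π (toCC (τ p.2 * σ p.1)) with hE2
  have honeτ : π (toCC (∑ j, τ j * τ j)) = 1 := by
    have h1 : toCC (∑ j, τ j * τ j) = 1 := by
      ext y
      have h2 := hτ1 y
      simp only [sq] at h2
      simp [toCC]
      norm_cast
    rw [h1, map_one]
  have honeσ : π (toCC (∑ i, σ i * σ i)) = 1 := by
    have h1 : toCC (∑ i, σ i * σ i) = 1 := by
      ext y
      have h2 := hσ1 y
      simp only [sq] at h2
      simp [toCC]
      norm_cast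
    rw [h1, map_one]
  -- decomposition of the first sum
  have hAσ : (∑ i, π (toCC (σ i)) * a (c i) * π (toCC (σ i)))
      = (∑ p : Fin n × Fin m, π (toCC (ρ p)) * a (c p.1) * π (toCC (ρ p))) + E1 := by
    calc (∑ i, π (toCC (σ i)) * a (c i) * π (toCC (σ i)))
        = ∑ i, π (toCC (σ i)) * a (c i) * π (toCC (σ i)) * π (toCC (∑ j, τ j * τ j)) := by
          rw [honeτ]
          exact Finset.sum_congr rfl fun i _ => (mul_one _).symm
      _ = ∑ i, ∑ j, π (toCC (σ i)) * a (c i) * π (toCC (σ i)) * π (toCC (τ j * τ j)) := by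
          refine Finset.sum_congr rfl fun i _ => ?_
          rw [toCC_sum, map_sum, Finset.mul_sum]
      _ = ∑ p : Fin n × Fin m, π (toCC (σ p.1)) * a (c p.1) * π (toCC (σ p.1))
            * π (toCC (τ p.2 * τ p.2)) := by
          rw [Fintype.sum_prod_type]
      _ = ∑ p : Fin n × Fin m, (π (toCC (ρ p)) * a (c p.1) * π (toCC (ρ p))
            + π (toCC (σ p.1)) * (a (c p.1) * π (toCC (τ p.2)) - π (toCC (τ p.2)) * a (c p.1))
              * π (toCC (σ p.1 * τ p.2))) :=
          Finset.sum_congr rfl fun p _ => sandwich_identity π (a (c p.1)) (σ p.1) (τ p.2)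
      _ = (∑ p : Fin n × Fin m, π (toCC (ρ p)) * a (c p.1) * π (toCC (ρ p))) + E1 := by
          rw [Finset.sum_add_distrib]
  -- decomposition of the second sum
  have hAτ : (∑ j, π (toCC (τ j)) * a (d j) * π (toCC (τ j)))
      = (∑ p : Fin n × Fin m, π (toCC (ρ p)) * a (d p.2) * π (toCC (ρ p))) + E2 := by
    calc (∑ j, π (toCC (τ j)) * a (d j) * π (toCC (τ j)))
        = ∑ j, π (toCC (τ j)) * a (d j) * π (toCC (τ j)) * π (toCC (∑ i, σ i * σ i)) := by
          rw [honeσ]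
          exact Finset.sum_congr rfl fun j _ => (mul_one _).symm
      _ = ∑ j, ∑ i, π (toCC (τ j)) * a (d j) * π (toCC (τ j)) * π (toCC (σ i * σ i)) := by
          refine Finset.sum_congr rfl fun j _ => ?_
          rw [toCC_sum, map_sum, Finset.mul_sum]
      _ = ∑ i, ∑ j, π (toCC (τ j)) * a (d j) * π (toCC (τ j)) * π (toCC (σ i * σ i)) :=
          Finset.sum_comm
      _ = ∑ p : Fin n × Fin m, π (toCC (τ p.2)) * a (d p.2) * π (toCC (τ p.2))
            * π (toCC (σ p.1 * σ p.1)) := by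
          rw [Fintype.sum_prod_type]
      _ = ∑ p : Fin n × Fin m, (π (toCC (τ p.2 * σ p.1)) * a (d p.2) * π (toCC (τ p.2 * σ p.1))
            + π (toCC (τ p.2)) * (a (d p.2) * π (toCC (σ p.1)) - π (toCC (σ p.1)) * a (d p.2))
              * π (toCC (τ p.2 * σ p.1))) :=
          Finset.sum_congr rfl fun p _ => sandwich_identity π (a (d p.2)) (τ p.2) (σ p.1)
      _ = (∑ p : Fin n × Fin m, π (toCC (ρ p)) * a (d p.2) * π (toCC (ρ p))) + E2 := by
          rw [Finset.sum_add_distrib]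
          congr 1
          refine Finset.sum_congr rfl fun p _ => ?_
          rw [hρ]
          rw [mul_comm (τ p.2) (σ p.1)]
  -- the compact part
  set K : H →L[ℂ] H := E1 - E2 with hK
  have hKc : IsCompactOperator ⇑K := by
    have h1 : IsCompactOperator ⇑E1 := by
      refine isCompactOperator_sum _ _ fun p _ => ?_
      exact isCompactOperator_mul_mul (ha (c p.1) (toCC (τ p.2)))
    have h2 : IsCompactOperator ⇑E2 := by
      refine isCompactOperator_sum _ _ fun p _ => ?_
      exact isCompactOperator_mul_mul (ha (d p.2) (toCC (σ p.1)))
    have : ⇑K = ⇑E1 - ⇑E2 := rfl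
    rw [this]
    exact h1.sub h2
  refine ⟨K, hKc, ?_⟩
  have hdiff : (∑ i, π (toCC (σ i)) * a (c i) * π (toCC (σ i)))
      - (∑ j, π (toCC (τ j)) * a (d j) * π (toCC (τ j))) - K = S := by
    rw [hAσ, hAτ, hK, hS]
    have hsub : ∑ p : Fin n × Fin m, π (toCC (ρ p)) * D p * π (toCC (ρ p))
        = (∑ p : Fin n × Fin m, π (toCC (ρ p)) * a (c p.1) * π (toCC (ρ p)))
          - ∑ p : Fin n × Fin m, π (toCC (ρ p)) * a (d p.2) * π (toCC (ρ p)) := by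
      rw [← Finset.sum_sub_distrib]
      refine Finset.sum_congr rfl fun p _ => ?_
      rw [hD]
      noncomm_ring
    rw [hsub]
    abel
  rw [hdiff, hS]
  have hcongr : S = ∑ p : Fin n × Fin m, π (toCC (ρ p)) ∘L D p ∘L π (toCC (ρ p)) := by
    exact Finset.sum_congr rfl fun p _ => by ext v; rfl
  rw [hS] at hcongr
  rw [hcongr]
  refine sum_triple_norm_le π Finset.univ ρ ρ D hε ?_ ?_ ?_
  · intro y
    have hexp : ∑ p : Fin n × Fin m, (ρ p y)^2
        = (∑ i, (σ i y)^2) * ∑ j, (τ j y)^2 := by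
      rw [Finset.sum_mul_sum]
      rw [← Finset.sum_product']
      refine Finset.sum_congr rfl fun p _ => ?_
      rw [hρ]
      simp [ContinuousMap.mul_apply]
      ring
    rw [hexp, hσ1 y, hτ1 y, one_mul]
  · intro y
    have hexp : ∑ p : Fin n × Fin m, (ρ p y)^2
        = (∑ i, (σ i y)^2) * ∑ j, (τ j y)^2 := by
      rw [Finset.sum_mul_sum]
      rw [← Finset.sum_product']
      refine Finset.sum_congr rfl fun p _ => ?_
      rw [hρ]
      simp [ContinuousMap.mul_apply]
      ring
    rw [hexp, hσ1 y, hτ1 y, one_mul]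
  · intro p _ v
    have hmem : π (toCC (ρ p)) v ∈ suppSubspace π (Q p.1 p.2) := by
      refine pi_mem_suppSubspace π (ρ p) (fun y hy => ?_) v
      refine hsupp p.1 p.2 y ?_
      rw [hρ] at hy
      simpa [ContinuousMap.mul_apply] using hy
    calc ‖D p (π (toCC (ρ p)) v)‖ ≤ normOn π (D p) (Q p.1 p.2) * ‖π (toCC (ρ p)) v‖ :=
          normOn_bound π (D p) (Q p.1 p.2) hmem
      _ ≤ ε * ‖π (toCC (ρ p)) v‖ :=
          mul_le_mul_of_nonneg_right (hnorm p.1 p.2) (norm_nonneg _)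

end Aux6


section Aux7

variable {X : Type*} [TopologicalSpace X] [CompactSpace X] [T2Space X]
variable {H : Type*} [NormedAddCommGroup H] [InnerProductSpace ℂ H] [CompleteSpace H]
variable (π : C(X, ℂ) →⋆ₐ[ℂ] (H →L[ℂ] H))

/-- The sandwiched partition sum approximates `a x` modulo `J_x`. -/
lemma partition_point_estimate (hconv : LocStrongConv π)
    (a : X → H →L[ℂ] H) (ha : ∀ x', a x' ∈ localOps π)
    {n : ℕ} (c : Fin n → X) (σ : Fin n → C(X,ℝ)) (U : X → Set X)
    {ε : ℝ} (hε : 0 ≤ ε) (x : X) (hUx : U x ∈ 𝓝 x)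
    (hicc : ∀ i y, σ i y ∈ Set.Icc (-1:ℝ) 1)
    (hσ1 : ∀ y, ∑ i, (σ i y)^2 = 1)
    (hsupp : ∀ i y, σ i y ≠ 0 → y ∈ interior (U (c i)))
    (hnorm : ∀ i, normOn π (a (c i) - a x) (U (c i) ∩ U x) ≤ ε) :
    ∃ j ∈ Jloc π x, ‖(∑ i, π (toCC (σ i)) * a (c i) * π (toCC (σ i))) - a x - j‖ ≤ ε := by
  classical
  obtain ⟨θ, hθloc, hθ0⟩ := exists_bump x isOpen_interior
    (mem_interior_iff_mem_nhds.mpr hUx)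
  have hθx : θ x = 1 := by
    obtain ⟨N, hN, h1⟩ := hθloc.2
    exact h1 x (mem_of_mem_nhds hN)
  have hone : π (toCC (∑ i, σ i * σ i)) = 1 := by
    have h1 : toCC (∑ i, σ i * σ i) = 1 := by
      ext y
      have h2 := hσ1 y
      simp only [sq] at h2
      simp [toCC]
      norm_cast
    rw [h1, map_one]
  -- the compact correction
  set K₀ : H →L[ℂ] H := ∑ i, (π (toCC (σ i)) * a x - a x * π (toCC (σ i))) * π (toCC (σ i))
    with hK₀
  have hK₀c : IsCompactOperator ⇑K₀ := by
    refine isCompactOperator_sum _ _ fun i _ => ?_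
    have h1 : IsCompactOperator ⇑(a x * π (toCC (σ i)) - π (toCC (σ i)) * a x) := by
      have := ha x (toCC (σ i))
      exact this
    have h2 : IsCompactOperator ⇑(π (toCC (σ i)) * a x - a x * π (toCC (σ i))) := by
      have hneg : π (toCC (σ i)) * a x - a x * π (toCC (σ i))
          = -(a x * π (toCC (σ i)) - π (toCC (σ i)) * a x) := by noncomm_ring
      rw [hneg]
      exact h1.neg
    have h3 : IsCompactOperator
        ⇑((π (toCC (σ i)) * a x - a x * π (toCC (σ i))) ∘L π (toCC (σ i))) :=
      h2.comp_clm _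
    exact h3
  have h1 : a x = ∑ i, a x * π (toCC (σ i)) * π (toCC (σ i)) := by
    calc a x = a x * π (toCC (∑ i, σ i * σ i)) := by rw [hone, mul_one]
      _ = ∑ i, a x * π (toCC (σ i * σ i)) := by
          rw [toCC_sum, map_sum, Finset.mul_sum]
      _ = ∑ i, a x * π (toCC (σ i)) * π (toCC (σ i)) := by
          refine Finset.sum_congr rfl fun i _ => ?_
          rw [← pi_mul π (σ i) (σ i)]
          noncomm_ring
  have hK₀eq : (∑ i, π (toCC (σ i)) * a x * π (toCC (σ i))) - a x = K₀ := by
    rw [hK₀]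
    have hexp : ∑ i, (π (toCC (σ i)) * a x - a x * π (toCC (σ i))) * π (toCC (σ i))
        = (∑ i, π (toCC (σ i)) * a x * π (toCC (σ i)))
          - ∑ i, a x * π (toCC (σ i)) * π (toCC (σ i)) := by
      rw [← Finset.sum_sub_distrib]
      exact Finset.sum_congr rfl fun i _ => by noncomm_ring
    rw [hexp, ← h1]
  -- the main part E
  set E : H →L[ℂ] H := ∑ i, π (toCC (σ i)) * (a (c i) - a x) * π (toCC (σ i)) with hE
  have hAeq : (∑ i, π (toCC (σ i)) * a (c i) * π (toCC (σ i))) - a x = E + K₀ := by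
    rw [← hK₀eq]
    have h2 : (∑ i, π (toCC (σ i)) * (a (c i) - a x) * π (toCC (σ i)))
        + ∑ i, π (toCC (σ i)) * a x * π (toCC (σ i))
        = ∑ i, π (toCC (σ i)) * a (c i) * π (toCC (σ i)) := by
      rw [← Finset.sum_add_distrib]
      exact Finset.sum_congr rfl fun i _ => by noncomm_ring
    rw [← h2, ← hE]
    abel
  have hEops : E ∈ localOps π := by
    refine localOps_sum π _ _ fun i _ => ?_
    have h1 : π (toCC (σ i)) ∈ localOps π := pi_mem_localOps π _
    have h2 : a (c i) - a x ∈ localOps π := localOps_sub π (ha (c i)) (ha x)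
    have h3 := localOps_comp π (localOps_comp π h1 h2) h1
    have heq : (π (toCC (σ i)) ∘L (a (c i) - a x)) ∘L π (toCC (σ i))
        = π (toCC (σ i)) * (a (c i) - a x) * π (toCC (σ i)) := by ext v; rfl
    rwa [heq] at h3
  -- split E by the localizer θ
  have hθ1m : toCC ((1:C(X,ℝ)) - θ) x = 0 := by
    simp [toCC, hθx]
  set j₁ : H →L[ℂ] H := E ∘L π (toCC ((1:C(X,ℝ)) - θ)) with hj₁
  have hj₁mem : j₁ ∈ Jloc π x := comp_pi_mem_Jloc π hEops hθ1m
  have hEsplit : E = j₁ + E * π (toCC θ) := by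
    rw [hj₁]
    have : E ∘L π (toCC ((1:C(X,ℝ)) - θ)) = E * π (toCC ((1:C(X,ℝ)) - θ)) := by ext v; rfl
    rw [this, toCC_sub, toCC_one, map_sub, map_one]
    noncomm_ring
  -- expand E * π θ
  have hEθ : E * π (toCC θ) = ∑ i, π (toCC (σ i)) * (a (c i) - a x) * π (toCC (σ i * θ)) := by
    rw [hE, Finset.sum_mul]
    refine Finset.sum_congr rfl fun i _ => ?_
    rw [← pi_mul π (σ i) θ]
    noncomm_ring
  -- split the sum by whether σ i vanishes at x
  set s₀ : Finset (Fin n) := Finset.univ.filter (fun i => σ i x = 0) with hs₀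
  set s₁ : Finset (Fin n) := Finset.univ.filter (fun i => σ i x ≠ 0) with hs₁
  have hsplit : ∑ i, π (toCC (σ i)) * (a (c i) - a x) * π (toCC (σ i * θ))
      = (∑ i ∈ s₀, π (toCC (σ i)) * (a (c i) - a x) * π (toCC (σ i * θ)))
        + ∑ i ∈ s₁, π (toCC (σ i)) * (a (c i) - a x) * π (toCC (σ i * θ)) := by
    rw [hs₀, hs₁]
    exact (Finset.sum_filter_add_sum_filter_not Finset.univ _ _).symm
  have hs₀mem : (∑ i ∈ s₀, π (toCC (σ i)) * (a (c i) - a x) * π (toCC (σ i * θ)))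
      ∈ Jloc π x := by
    refine Jloc_sum π _ _ fun i hi => ?_
    have hzero : toCC (σ i * θ) x = 0 := by
      have : σ i x = 0 := by
        rw [hs₀] at hi
        exact (Finset.mem_filter.mp hi).2
      simp [toCC, ContinuousMap.mul_apply, this]
    have hmem : π (toCC (σ i)) ∘L (a (c i) - a x) ∈ localOps π :=
      localOps_comp π (pi_mem_localOps π _) (localOps_sub π (ha (c i)) (ha x))
    have h := comp_pi_mem_Jloc π hmem hzero
    have heq : (π (toCC (σ i)) ∘L (a (c i) - a x)) ∘L π (toCC (σ i * θ))
        = π (toCC (σ i)) * (a (c i) - a x) * π (toCC (σ i * θ)) := by ext v; rfl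
    rwa [heq] at h
  -- the remainder is small
  have hrem : ‖∑ i ∈ s₁, π (toCC (σ i)) * (a (c i) - a x) * π (toCC (σ i * θ))‖ ≤ ε := by
    have hcongr : (∑ i ∈ s₁, π (toCC (σ i)) * (a (c i) - a x) * π (toCC (σ i * θ)))
        = ∑ i ∈ s₁, π (toCC (σ i)) ∘L (a (c i) - a x) ∘L π (toCC (σ i * θ)) :=
      Finset.sum_congr rfl fun i _ => by ext v; rfl
    rw [hcongr]
    refine sum_triple_norm_le π s₁ σ (fun i => σ i * θ) (fun i => a (c i) - a x) hε ?_ ?_ ?_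
    · intro y
      calc ∑ i ∈ s₁, (σ i y)^2 ≤ ∑ i, (σ i y)^2 :=
            Finset.sum_le_sum_of_subset_of_nonneg (Finset.subset_univ s₁)
              (fun i _ _ => sq_nonneg _)
        _ = 1 := hσ1 y
    · intro y
      have hterm : ∀ i, ((σ i * θ) y)^2 ≤ (σ i y)^2 := by
        intro i
        rw [ContinuousMap.mul_apply, mul_pow]
        have hθy : (θ y)^2 ≤ 1 := by
          have h1 := (hθloc.1 y).1
          have h2 := (hθloc.1 y).2
          nlinarith
        nlinarith [sq_nonneg (σ i y)]
      calc ∑ i ∈ s₁, ((σ i * θ) y)^2 ≤ ∑ i ∈ s₁, (σ i y)^2 :=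
            Finset.sum_le_sum fun i _ => hterm i
        _ ≤ ∑ i, (σ i y)^2 :=
            Finset.sum_le_sum_of_subset_of_nonneg (Finset.subset_univ s₁)
              (fun i _ _ => sq_nonneg _)
        _ = 1 := hσ1 y
    · intro i hi v
      have hxi : x ∈ interior (U (c i)) := by
        refine hsupp i x ?_
        rw [hs₁] at hi
        exact (Finset.mem_filter.mp hi).2
      have hmem : π (toCC (σ i * θ)) v ∈ suppSubspace π (U (c i) ∩ U x) := by
        refine pi_mem_suppSubspace π _ (fun y hy => ?_) v
        rw [ContinuousMap.mul_apply] at hy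
        have hy1 : σ i y ≠ 0 := fun h => hy (by rw [h, zero_mul])
        have hy2 : θ y ≠ 0 := fun h => hy (by rw [h, mul_zero])
        have hyU : y ∈ interior (U x) := by
          by_contra hyn
          exact hy2 (hθ0 y hyn)
        exact ⟨interior_subset (hsupp i y hy1), interior_subset hyU⟩
      calc ‖(a (c i) - a x) (π (toCC (σ i * θ)) v)‖
          ≤ normOn π (a (c i) - a x) (U (c i) ∩ U x) * ‖π (toCC (σ i * θ)) v‖ :=
            normOn_bound π _ _ hmem
        _ ≤ ε * ‖π (toCC (σ i * θ)) v‖ :=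
            mul_le_mul_of_nonneg_right (hnorm i) (norm_nonneg _)
  -- assemble
  refine ⟨K₀ + j₁ + ∑ i ∈ s₀, π (toCC (σ i)) * (a (c i) - a x) * π (toCC (σ i * θ)), ?_, ?_⟩
  · exact Jloc_add π (Jloc_add π (compact_mem_Jloc π hconv x hK₀c) hj₁mem) hs₀mem
  · have heq : (∑ i, π (toCC (σ i)) * a (c i) * π (toCC (σ i))) - a x
        - (K₀ + j₁ + ∑ i ∈ s₀, π (toCC (σ i)) * (a (c i) - a x) * π (toCC (σ i * θ)))
        = ∑ i ∈ s₁, π (toCC (σ i)) * (a (c i) - a x) * π (toCC (σ i * θ)) := by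
      rw [hAeq]
      rw [hEsplit, hEθ, hsplit]
      abel
    rw [heq]
    exact hrem

end Aux7


section Aux8

variable {X : Type*} [TopologicalSpace X] [CompactSpace X] [T2Space X]
variable {H : Type*} [NormedAddCommGroup H] [InnerProductSpace ℂ H] [CompleteSpace H]
variable (π : C(X, ℂ) →⋆ₐ[ℂ] (H →L[ℂ] H))

lemma sandwich_mem_localOps {A : H →L[ℂ] H} (hA : A ∈ localOps π) (f : C(X,ℝ)) :
    π (toCC f) * A * π (toCC f) ∈ localOps π := by
  have h := localOps_comp π (localOps_comp π (pi_mem_localOps π (toCC f)) hA)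
    (pi_mem_localOps π (toCC f))
  have heq : (π (toCC f) ∘L A) ∘L π (toCC f) = π (toCC f) * A * π (toCC f) := by ext v; rfl
  rwa [heq] at h

end Aux8

/-- Under the localization hypotheses, a family of local representatives
`{a_x ∈ 𝒜_x}` (given by representatives `a x ∈ 𝒜`) is the localization `{p_x(A)}` of a
single local operator `A ∈ 𝒜` if and only if the family is continuous. -/
theorem local_family_realizable_iff_continuous
    {X : Type*} [TopologicalSpace X] [CompactSpace X] [T2Space X]
    {H : Type*} [NormedAddCommGroup H] [InnerProductSpace ℂ H] [CompleteSpace H]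
    (π : C(X, ℂ) →⋆ₐ[ℂ] (H →L[ℂ] H)) (hπ : FaithfulNoCompact π) (hconv : LocStrongConv π)
    (a : X → H →L[ℂ] H) (ha : ∀ x, a x ∈ localOps π) :
    (∃ A ∈ localOps π, ∀ x : X, A - a x ∈ Jloc π x) ↔
      ContinuousLocalFamily π a := by
  classical
  constructor
  · -- forward direction
    rintro ⟨A, hAops, hAJ⟩ ε hε
    have h : ∀ x : X, ∃ U ∈ 𝓝 x, normOn π (A - a x) U ≤ ε/2 :=
      fun x => Jloc_small_normOn π hconv (hAJ x) (by positivity)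
    choose U hU hUn using h
    refine ⟨U, hU, fun x x' => ?_⟩
    have heq : a x - a x' = (A - a x') - (A - a x) := by abel
    rw [heq]
    calc normOn π ((A - a x') - (A - a x)) (U x ∩ U x')
        ≤ normOn π (A - a x') (U x ∩ U x') + normOn π (A - a x) (U x ∩ U x') :=
          normOn_sub_le π _ _ _
      _ ≤ normOn π (A - a x') (U x') + normOn π (A - a x) (U x) :=
          add_le_add (normOn_mono π _ Set.inter_subset_right)
            (normOn_mono π _ Set.inter_subset_left)
      _ ≤ ε/2 + ε/2 := add_le_add (hUn x') (hUn x)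
      _ = ε := by ring
  · -- backward direction
    intro hcont
    -- choose neighbourhood families at every scale
    have hlev : ∀ n : ℕ, ∃ U : X → Set X, (∀ x, U x ∈ 𝓝 x) ∧
        ∀ x x', normOn π (a x - a x') (U x ∩ U x') ≤ (1/2 : ℝ)^n := by
      intro n
      obtain ⟨U, hU1, hU2⟩ := hcont ((1/2 : ℝ)^n) (by positivity)
      exact ⟨U, hU1, hU2⟩
    choose U hU1 hU2 using hlev
    -- nested versions
    set W : ℕ → X → Set X := fun n x => ⋂ k ∈ Finset.range (n+1), U k x with hW
    have hWnhds : ∀ n x, W n x ∈ 𝓝 x := by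
      intro n x
      rw [hW]
      exact (Filter.biInter_finset_mem _).mpr fun k _ => hU1 k x
    have hWsub : ∀ n x, W n x ⊆ U n x := by
      intro n x
      rw [hW]
      exact Set.biInter_subset_of_mem (Finset.self_mem_range_succ n)
    have hWmono : ∀ m n, m ≤ n → ∀ x, W n x ⊆ W m x := by
      intro m n hmn x
      rw [hW]
      refine Set.biInter_subset_biInter_left ?_
      intro k hk
      exact Finset.mem_range_succ_iff.mpr
        ((Finset.mem_range_succ_iff.mp hk).trans hmn)
    have hWbound : ∀ n (x x' : X),
        normOn π (a x - a x') (W n x ∩ W n x') ≤ (1/2 : ℝ)^n := by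
      intro n x x'
      refine (normOn_mono π _ (Set.inter_subset_inter (hWsub n x) (hWsub n x'))).trans
        (hU2 n x x')
    -- partitions of unity at every scale
    have hlevel : ∀ n : ℕ, ∃ (N : ℕ) (c : Fin N → X) (σ : Fin N → C(X,ℝ)),
        (∀ i y, σ i y ∈ Set.Icc (-1:ℝ) 1) ∧ (∀ y, ∑ i, (σ i y)^2 = 1) ∧
        (∀ i y, σ i y ≠ 0 → y ∈ interior (W n (c i))) := by
      intro n
      obtain ⟨N, c, χ, hicc, hsupp, hsum⟩ := exists_partition (W n) (hWnhds n)
      refine ⟨N, c, fun i => sqrtCM (χ i), fun i y => ?_, fun y => ?_, fun i y hy => ?_⟩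
      · constructor
        · have := Real.sqrt_nonneg (χ i y)
          simp only [sqrtCM_apply]
          linarith
        · simp only [sqrtCM_apply]
          exact Real.sqrt_le_one.mpr (hicc i y).2
      · have : ∀ i, (sqrtCM (χ i) y)^2 = χ i y := by
          intro i
          simp only [sqrtCM_apply]
          exact Real.sq_sqrt (hicc i y).1
        simp only [this]
        exact hsum y
      · refine hsupp i y fun h0 => ?_
        rw [sqrtCM_apply, h0] at hy
        exact hy Real.sqrt_zero
    choose N c σ hicc hsum hsupp using hlevel
    -- the approximating operators
    set Aop : ℕ → (H →L[ℂ] H) :=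
      fun n => ∑ i, π (toCC (σ n i)) * a (c n i) * π (toCC (σ n i)) with hAop
    have hAopmem : ∀ n, Aop n ∈ localOps π := by
      intro n
      rw [hAop]
      exact localOps_sum π _ _ fun i _ => sandwich_mem_localOps π (ha (c n i)) _
    -- point estimates
    have hP1 : ∀ n (x : X), ∃ j ∈ Jloc π x, ‖Aop n - a x - j‖ ≤ (1/2 : ℝ)^n := by
      intro n x
      refine partition_point_estimate π hconv a ha (c n) (σ n) (W n)
        (by positivity) x (hWnhds n x) (hicc n) (hsum n) (hsupp n) ?_
      intro i
      exact hWbound n (c n i) x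
    -- difference estimates
    have hP2 : ∀ n, ∃ K : H →L[ℂ] H, IsCompactOperator ⇑K ∧
        ‖Aop (n+1) - Aop n - K‖ ≤ (1/2 : ℝ)^n := by
      intro n
      refine partition_diff_estimate π a ha (c (n+1)) (c n) (σ (n+1)) (σ n)
        (fun i j => W n (c (n+1) i) ∩ W n (c n j)) (by positivity)
        (hsum (n+1)) (hsum n) ?_ ?_
      · intro i j y hy
        have hy1 : σ (n+1) i y ≠ 0 := fun h => hy (by rw [h, zero_mul])
        have hy2 : σ n j y ≠ 0 := fun h => hy (by rw [h, mul_zero])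
        constructor
        · exact hWmono n (n+1) (Nat.le_succ n) _
            (interior_subset (hsupp (n+1) i y hy1))
        · exact interior_subset (hsupp n j y hy2)
      · intro i j
        exact hWbound n (c (n+1) i) (c n j)
    choose Ks hKc hKb using hP2
    -- telescoping corrected sequence
    set Csum : ℕ → (H →L[ℂ] H) := fun n => ∑ k ∈ Finset.range n, Ks k with hCsum
    have hCsumc : ∀ n, IsCompactOperator ⇑(Csum n) := by
      intro n
      rw [hCsum]
      exact isCompactOperator_sum _ _ fun k _ => hKc k
    set B : ℕ → (H →L[ℂ] H) := fun n => Aop n - Csum n with hB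
    have hBdiff : ∀ n, ‖B n - B (n+1)‖ ≤ 1 * (1/2 : ℝ)^n := by
      intro n
      have heq : B n - B (n+1) = -(Aop (n+1) - Aop n - Ks n) := by
        rw [hB, hCsum]
        simp only
        rw [Finset.sum_range_succ]
        abel
      rw [heq, norm_neg, one_mul]
      exact hKb n
    have hcauchy : CauchySeq B :=
      SeminormedAddCommGroup.cauchySeq_of_le_geometric (C := 1) (r := 1/2)
        (by norm_num) hBdiff
    obtain ⟨A, hlim⟩ := cauchySeq_tendsto_of_complete hcauchy
    have hBmem : ∀ n, B n ∈ localOps π := by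
      intro n
      rw [hB]
      exact localOps_sub π (hAopmem n) (compact_mem_localOps π (hCsumc n))
    refine ⟨A, ?_, ?_⟩
    · exact (isClosed_localOps π).mem_of_tendsto hlim
        (Filter.Eventually.of_forall hBmem)
    · intro x
      have hclosed := isClosed_Jloc π x
      rw [← hclosed.closure_eq]
      rw [Metric.mem_closure_iff]
      intro δ hδ
      have htend : Filter.Tendsto (fun n : ℕ => (1/2 : ℝ)^n) Filter.atTop (𝓝 0) :=
        tendsto_pow_atTop_nhds_zero_of_lt_one (by norm_num) (by norm_num)
      have h2 : ∀ᶠ n in Filter.atTop, (1/2 : ℝ)^n < δ/2 :=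
        htend.eventually_lt_const (by positivity)
      obtain ⟨Nk, hNk⟩ := Metric.tendsto_atTop.mp hlim (δ/2) (by positivity)
      obtain ⟨n, hn2, hn1⟩ :=
        (h2.and (Filter.eventually_atTop.mpr ⟨Nk, hNk⟩)).exists
      obtain ⟨j, hjmem, hjb⟩ := hP1 n x
      refine ⟨j - Csum n,
        Jloc_sub π hjmem (compact_mem_Jloc π hconv x (hCsumc n)), ?_⟩
      rw [dist_eq_norm]
      have heq : A - a x - (j - Csum n) = (A - B n) + (Aop n - a x - j) := by
        simp only [hB]
        abel
      rw [heq]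
      calc ‖(A - B n) + (Aop n - a x - j)‖
          ≤ ‖A - B n‖ + ‖Aop n - a x - j‖ := norm_add_le _ _
        _ < δ/2 + δ/2 := by
            refine add_lt_add ?_ (hjb.trans_lt hn2)
            rw [← dist_eq_norm, dist_comm]
            exact hn1
        _ = δ := by ring
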